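/- arXiv:2202.06564 — 3 statements merged into one kernel-verified Lean document; each statement's English description precedes it below -/
import Mathlib

section
/- Let P, L, N be positive integers with N ≤ min(P, L), and let α₁ ≥ α₂ ≥ … ≥ α_N ≥ 0 be real numbers. Let μ_P denote the product of P copies of the standard exponential distribution on (0,∞)^P and μ_L the product of L copies on (0,∞)^L; for x ∈ (0,∞)^P let x_(1) ≤ x_(2) ≤ … ≤ x_(P) denote the nondecreasing rearrangement of the coordinates of x, and similarly for y ∈ (0,∞)^L. Then ∑_{i=1}^N ∫_{(0,∞)^P} ∫_{(0,∞)^L} log₂(1 + α_i · x_(i) · y_(i)) dμ_L(y) dμ_P(x) ≤ ∑_{i=1}^N log₂(1 + α_i · (∑_{j=1}^i 1/(P−j+1)) · (∑_{j=1}^i 1/(L−j+1))). -/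
open Real MeasureTheory ProbabilityTheory

/-- The `i`-th ascending order statistic of the tuple `x`: the `i`-th smallest coordinate. -/
noncomputable def orderStat {n : ℕ} (x : Fin n → ℝ) (i : Fin n) : ℝ :=
  x (Tuple.sort x i)

lemma orderStat_le_iff {n : ℕ} (x : Fin n → ℝ) (j : Fin n) (t : ℝ) :
    orderStat x j ≤ t ↔ (j : ℕ) < (Finset.univ.filter fun i => x i ≤ t).card := by
  classical
  have h := Tuple.lt_card_le_iff_apply_le_of_monotone (f := x ∘ Tuple.sort x) (a := t)
    (Tuple.monotone_sort x) (j := j)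
  have hc : Fintype.card {i // (x ∘ Tuple.sort x) i ≤ t} = Fintype.card {i // x i ≤ t} :=
    Fintype.card_congr (Equiv.subtypeEquiv (Tuple.sort x) (fun i => Iff.rfl))
  rw [← Fintype.card_subtype, hc, Fintype.card_subtype] at h
  exact h.symm

lemma measurable_count {n : ℕ} (t : ℝ) :
    Measurable (fun x : Fin n → ℝ => (Finset.univ.filter fun i => x i ≤ t).card) := by
  classical
  have : (fun x : Fin n → ℝ => (Finset.univ.filter fun i => x i ≤ t).card)
      = fun x => ∑ i : Fin n, if x i ≤ t then 1 else 0 := by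
    funext x; rw [Finset.card_filter]
  rw [this]
  exact Finset.measurable_sum _ (fun i _ => Measurable.ite
    (measurableSet_le (measurable_pi_apply i) measurable_const) measurable_const measurable_const)

lemma measurable_orderStat {n : ℕ} (j : Fin n) :
    Measurable (fun x : Fin n → ℝ => orderStat x j) := by
  apply measurable_of_Iic
  intro t
  have : (fun x : Fin n → ℝ => orderStat x j) ⁻¹' (Set.Iic t)
      = {x | (j : ℕ) < (Finset.univ.filter fun i => x i ≤ t).card} := by
    ext x; simp [orderStat_le_iff]
  rw [this]
  exact measurableSet_lt measurable_const (measurable_count t)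

instance : IsProbabilityMeasure (expMeasure 1) := isProbabilityMeasure_expMeasure one_pos

lemma abs_orderStat_le {n : ℕ} (x : Fin n → ℝ) (j : Fin n) :
    |orderStat x j| ≤ ∑ i, |x i| := by
  have : |orderStat x j| = |x (Tuple.sort x j)| := rfl
  rw [this]
  exact Finset.single_le_sum (fun i _ => abs_nonneg (x i)) (Finset.mem_univ _)

lemma orderStat_nonneg {n : ℕ} {x : Fin n → ℝ} (hx : ∀ i, 0 ≤ x i) (j : Fin n) :
    0 ≤ orderStat x j := hx _

lemma expMeasure_Iic (t : ℝ) :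
    expMeasure 1 (Set.Iic t) = ENNReal.ofReal (if 0 ≤ t then 1 - exp (-t) else 0) := by
  have h1 : expMeasure 1 (Set.Iic t) = ∫⁻ y in Set.Iic t, exponentialPDF 1 y := by
    rw [expMeasure, gammaMeasure, withDensity_apply _ measurableSet_Iic]
    rfl
  rw [h1, lintegral_exponentialPDF_eq_antiDeriv one_pos t]
  norm_num

lemma expMeasure_Ioi {t : ℝ} (ht : 0 ≤ t) :
    expMeasure 1 (Set.Ioi t) = ENNReal.ofReal (exp (-t)) := by
  have hb : ENNReal.ofReal (exp (-t)) ≤ 1 := by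
    rw [← ENNReal.ofReal_one]
    exact ENNReal.ofReal_le_ofReal (exp_le_one_iff.mpr (by linarith))
  rw [← Set.compl_Iic, measure_compl measurableSet_Iic (measure_ne_top _ _), measure_univ,
    expMeasure_Iic, if_pos ht, ENNReal.ofReal_sub _ (exp_nonneg _), ENNReal.ofReal_one,
    ENNReal.sub_sub_cancel ENNReal.one_ne_top hb]

lemma expMeasure_Iio_zero : expMeasure 1 (Set.Iio 0) = 0 := by
  have : expMeasure 1 (Set.Iio 0) = ∫⁻ y in Set.Iio 0, exponentialPDF 1 y := by
    rw [expMeasure, gammaMeasure, withDensity_apply _ measurableSet_Iio]; rfl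
  rw [this, lintegral_exponentialPDF_of_nonpos le_rfl]

lemma ae_nonneg_pi {n : ℕ} :
    ∀ᵐ x : Fin n → ℝ ∂(Measure.pi fun _ => expMeasure 1), ∀ i, 0 ≤ x i := by
  rw [MeasureTheory.ae_all_iff]
  intro i
  have : {x : Fin n → ℝ | ¬ 0 ≤ x i} = Function.eval i ⁻¹' (Set.Iio 0) := by
    ext x; simp [not_le]
  rw [MeasureTheory.ae_iff, this]
  exact Measure.pi_eval_preimage_null _ expMeasure_Iio_zero

lemma map_eval_pi {n : ℕ} (i : Fin n) :
    (Measure.pi fun _ : Fin n => expMeasure 1).map (Function.eval i) = expMeasure 1 := by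
  ext s hs
  rw [Measure.map_apply (measurable_pi_apply i) hs, Set.eval_preimage, Measure.pi_pi]
  rw [Finset.prod_eq_single_of_mem i (Finset.mem_univ i)]
  · simp
  · intro j _ hj; simp [Function.update_of_ne hj]

lemma gammaPDFReal_def (a r x : ℝ) : gammaPDFReal a r x
    = if 0 ≤ x then r ^ a / (Gamma a) * x ^ (a-1) * exp (-(r * x)) else 0 := rfl

lemma integrable_id_expMeasure : Integrable (fun x : ℝ => x) (expMeasure 1) := by
  rw [expMeasure, gammaMeasure]
  show Integrable _ (MeasureTheory.Measure.withDensity _ fun x => ENNReal.ofReal (gammaPDFReal 1 1 x))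
  rw [integrable_withDensity_iff (measurable_gammaPDFReal 1 1).ennreal_ofReal
    (Filter.Eventually.of_forall fun x => ENNReal.ofReal_lt_top)]
  have hI : IntegrableOn (fun x : ℝ => rexp (-x) * x ^ ((2:ℝ) - 1)) (Set.Ioi 0) :=
    Real.GammaIntegral_convergent (by norm_num)
  have hI' : IntegrableOn (fun x : ℝ => x * (gammaPDF 1 1 x).toReal) (Set.Ioi 0) := by
    apply hI.congr_fun _ measurableSet_Ioi
    intro x hx
    show rexp (-x) * x ^ ((2:ℝ) - 1) = x * (gammaPDF 1 1 x).toReal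
    have hge : (0:ℝ) ≤ 1 ^ (1:ℝ) / Gamma 1 * x ^ ((1:ℝ) - 1) * rexp (-(1 * x)) := by
      have := gammaPDFReal_nonneg (one_pos (α := ℝ)) (one_pos (α := ℝ)) x
      rwa [gammaPDFReal_def, if_pos (le_of_lt (Set.mem_Ioi.mp hx))] at this
    rw [gammaPDF_of_nonneg (le_of_lt (Set.mem_Ioi.mp hx)), ENNReal.toReal_ofReal hge]
    rw [Real.Gamma_one, show ((2:ℝ) - 1) = 1 by norm_num, show ((1:ℝ) - 1) = 0 by norm_num,
      rpow_one, rpow_one, Real.rpow_zero]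
    simp [Real.rpow_natCast]
    ring
  have hzero : IntegrableOn (fun x : ℝ => x * (gammaPDF 1 1 x).toReal) (Set.Iic 0) := by
    have heq : Set.EqOn (fun x : ℝ => x * (gammaPDF 1 1 x).toReal) (fun _ => (0:ℝ)) (Set.Iic 0) := by
      intro x hx
      rcases eq_or_lt_of_le (Set.mem_Iic.mp hx) with h | h
      · simp [h]
      · simp [gammaPDF_of_neg h]
    exact (integrableOn_congr_fun heq measurableSet_Iic).mpr (integrableOn_zero)
  have : (fun x : ℝ => x * ((fun y => ENNReal.ofReal (gammaPDFReal 1 1 y)) x).toReal)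
      = fun x : ℝ => x * (gammaPDF 1 1 x).toReal := rfl
  rw [this, ← integrableOn_univ, ← Set.Iic_union_Ioi (a := (0:ℝ))]
  exact hzero.union hI'

lemma integrable_eval_pi {n : ℕ} (i : Fin n) :
    Integrable (fun x : Fin n → ℝ => x i) (Measure.pi fun _ : Fin n => expMeasure 1) := by
  have h := integrable_id_expMeasure
  rw [← map_eval_pi i] at h
  exact (integrable_map_measure h.aestronglyMeasurable
    (measurable_pi_apply i).aemeasurable).mp h

lemma integrable_orderStat {n : ℕ} (j : Fin n) :
    Integrable (fun x : Fin n → ℝ => orderStat x j)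
      (Measure.pi fun _ : Fin n => expMeasure 1) := by
  have hbound : Integrable (fun x : Fin n → ℝ => ∑ i, |x i|)
      (Measure.pi fun _ : Fin n => expMeasure 1) :=
    integrable_finset_sum _ (fun i _ => (integrable_eval_pi i).abs)
  exact hbound.mono ((measurable_orderStat j).aestronglyMeasurable)
    (Filter.Eventually.of_forall fun x => by
      simp only [Real.norm_eq_abs]
      exact (abs_orderStat_le x j).trans (le_abs_self _))

lemma filter_eq_pi {n : ℕ} (t : ℝ) (S : Finset (Fin n)) :
    {x : Fin n → ℝ | (Finset.univ.filter fun i => x i ≤ t) = S}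
      = Set.pi Set.univ (fun i => if i ∈ S then Set.Iic t else Set.Ioi t) := by
  classical
  ext x
  simp only [Set.mem_setOf_eq, Set.mem_pi, Set.mem_univ, forall_true_left, Finset.ext_iff,
    Finset.mem_filter, Finset.mem_univ, true_and]
  constructor
  · intro h i
    by_cases hi : i ∈ S
    · simp only [if_pos hi]; exact (h i).mpr hi
    · simp only [if_neg hi, Set.mem_Ioi]
      by_contra hc
      exact hi ((h i).mp (not_lt.mp hc))
  · intro h i
    by_cases hi : i ∈ S
    · have := h i; rw [if_pos hi] at this; exact ⟨fun _ => hi, fun _ => this⟩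
    · have := h i; rw [if_neg hi] at this
      exact ⟨fun hle => absurd hle (not_le.mpr this), fun hmem => absurd hmem hi⟩

lemma measure_filter_eq {n : ℕ} {t : ℝ} (ht : 0 ≤ t) (S : Finset (Fin n)) :
    (Measure.pi fun _ : Fin n => expMeasure 1)
        {x | (Finset.univ.filter fun i => x i ≤ t) = S}
      = ENNReal.ofReal (1 - exp (-t)) ^ S.card * ENNReal.ofReal (exp (-t)) ^ (n - S.card) := by
  classical
  rw [filter_eq_pi, Measure.pi_pi]
  rw [← Finset.prod_sdiff (Finset.subset_univ S)]
  have h1 : ∀ i ∈ Finset.univ \ S, expMeasure 1 (if i ∈ S then Set.Iic t else Set.Ioi t)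
      = ENNReal.ofReal (exp (-t)) := by
    intro i hi
    rw [if_neg (Finset.mem_sdiff.mp hi).2, expMeasure_Ioi ht]
  have h2 : ∀ i ∈ S, expMeasure 1 (if i ∈ S then Set.Iic t else Set.Ioi t)
      = ENNReal.ofReal (1 - exp (-t)) := by
    intro i hi
    rw [if_pos hi, expMeasure_Iic, if_pos ht]
  rw [Finset.prod_congr rfl h1, Finset.prod_congr rfl h2, Finset.prod_const, Finset.prod_const,
    Finset.card_sdiff_of_subset (Finset.subset_univ S), Finset.card_univ, Fintype.card_fin, mul_comm]

lemma measure_count_le {n : ℕ} {t : ℝ} (ht : 0 ≤ t) (m : ℕ) :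
    (Measure.pi fun _ : Fin n => expMeasure 1)
        {x | (Finset.univ.filter fun i => x i ≤ t).card ≤ m}
      = ∑ k ∈ Finset.range (m+1), (n.choose k)
          * ENNReal.ofReal (1 - exp (-t)) ^ k * ENNReal.ofReal (exp (-t)) ^ (n - k) := by
  classical
  set 𝒮 : Finset (Finset (Fin n)) := Finset.univ.filter (fun S => S.card ≤ m) with h𝒮
  have hset : {x : Fin n → ℝ | (Finset.univ.filter fun i => x i ≤ t).card ≤ m}
      = ⋃ S ∈ 𝒮, {x | (Finset.univ.filter fun i => x i ≤ t) = S} := by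
    ext x
    simp only [Set.mem_setOf_eq, Set.mem_iUnion, h𝒮, Finset.mem_filter, Finset.mem_univ, true_and]
    constructor
    · intro h; exact ⟨_, h, rfl⟩
    · rintro ⟨S, hS, rfl⟩; exact hS
  rw [hset, measure_biUnion_finset]
  · rw [Finset.sum_congr rfl (fun S hS => measure_filter_eq ht S)]
    have hsplit : 𝒮 = (Finset.range (m+1)).biUnion
        (fun k => Finset.powersetCard k Finset.univ) := by
      ext S
      simp only [h𝒮, Finset.mem_filter, Finset.mem_univ, true_and, Finset.mem_biUnion,
        Finset.mem_range, Finset.mem_powersetCard_univ]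
      constructor
      · intro h; exact ⟨S.card, Nat.lt_succ_of_le h, rfl⟩
      · rintro ⟨k, hk, rfl⟩; exact Nat.lt_succ_iff.mp hk
    rw [hsplit, Finset.sum_biUnion]
    · apply Finset.sum_congr rfl
      intro k hk
      have : ∀ S ∈ Finset.powersetCard k (Finset.univ : Finset (Fin n)),
          ENNReal.ofReal (1 - exp (-t)) ^ S.card * ENNReal.ofReal (exp (-t)) ^ (n - S.card)
          = ENNReal.ofReal (1 - exp (-t)) ^ k * ENNReal.ofReal (exp (-t)) ^ (n - k) := by
        intro S hS
        rw [(Finset.mem_powersetCard_univ.mp hS)]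
      rw [Finset.sum_congr rfl this, Finset.sum_const, Finset.card_powersetCard,
        Finset.card_univ, Fintype.card_fin, nsmul_eq_mul, mul_assoc]
    · intro a _ b _ hab
      simp only [Function.onFun, Finset.disjoint_left, Finset.mem_powersetCard_univ]
      intro S hSa hSb
      exact hab (hSa ▸ hSb.symm ▸ rfl)
  · intro S hS S' hS' hne
    simp only [Function.onFun, Set.disjoint_left, Set.mem_setOf_eq]
    intro x hx hx'
    exact hne (hx ▸ hx' ▸ rfl)
  · intro S hS
    rw [filter_eq_pi]
    exact MeasurableSet.univ_pi (fun i => by split <;> measurability)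

lemma measure_orderStat_gt {n : ℕ} (j : Fin n) {t : ℝ} (ht : 0 ≤ t) :
    (Measure.pi fun _ : Fin n => expMeasure 1) {x | t < orderStat x j}
      = ∑ k ∈ Finset.range (j.1+1), (n.choose k)
          * ENNReal.ofReal (1 - exp (-t)) ^ k * ENNReal.ofReal (exp (-t)) ^ (n - k) := by
  have hset : {x : Fin n → ℝ | t < orderStat x j}
      = {x | (Finset.univ.filter fun i => x i ≤ t).card ≤ j.1} := by
    ext x
    rw [Set.mem_setOf_eq, Set.mem_setOf_eq, ← not_le, orderStat_le_iff, not_lt]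
  rw [hset, measure_count_le ht]

lemma integrableOn_aux (k : ℕ) {a : ℝ} (ha : 0 < a) :
    IntegrableOn (fun t : ℝ => (1 - exp (-t)) ^ k * exp (-a * t)) (Set.Ioi 0) := by
  apply MeasureTheory.Integrable.mono (exp_neg_integrableOn_Ioi 0 ha)
  · exact Continuous.aestronglyMeasurable (by continuity)
  · filter_upwards [ae_restrict_mem measurableSet_Ioi] with t htt
    have h1 : 0 ≤ 1 - exp (-t) := by
      have := exp_le_one_iff.mpr (by linarith [Set.mem_Ioi.mp htt] : -t ≤ 0); linarith
    have h2 : 1 - exp (-t) ≤ 1 := by linarith [exp_pos (-t)]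
    rw [Real.norm_eq_abs, Real.norm_eq_abs, abs_mul, abs_of_nonneg (pow_nonneg h1 k),
      abs_of_nonneg (exp_nonneg _)]
    calc (1 - exp (-t)) ^ k * exp (-a * t) ≤ 1 * exp (-a * t) := by
          apply mul_le_mul_of_nonneg_right (pow_le_one₀ h1 h2) (exp_nonneg _)
      _ = exp (-a * t) := one_mul _

lemma integral_exp_neg_mul {a : ℝ} (ha : 0 < a) :
    ∫ t in Set.Ioi (0:ℝ), exp (-a * t) = 1 / a := by
  have hd : ∀ x ∈ Set.Ioi (0:ℝ), HasDerivAt (fun t => -exp (-a * t) / a) (exp (-a * x)) x := by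
    intro x _
    have : HasDerivAt (fun t : ℝ => -a * t) (-a) x := by
      simpa using (hasDerivAt_id x).const_mul (-a)
    have h2 := (this.exp.neg).div_const a
    rw [show exp (-a * x) = -(exp (-a * x) * -a) / a by rw [eq_div_iff ha.ne']; ring]
    exact h2
  have htend : Filter.Tendsto (fun t => -exp (-a * t) / a) Filter.atTop (nhds 0) := by
    have : Filter.Tendsto (fun t : ℝ => exp (-a * t)) Filter.atTop (nhds 0) := by
      apply Real.tendsto_exp_atBot.comp
      exact Filter.Tendsto.const_mul_atTop_of_neg (neg_neg_iff_pos.mpr ha) Filter.tendsto_id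
    simpa using (this.neg).div_const a
  have hcont : ContinuousWithinAt (fun t => -exp (-a * t) / a) (Set.Ici 0) 0 :=
    (Continuous.continuousWithinAt (by continuity))
  have := MeasureTheory.integral_Ioi_of_hasDerivAt_of_tendsto hcont hd
    ((integrableOn_aux 0 ha).congr_fun (fun t _ => by simp) measurableSet_Ioi) htend
  rw [this]
  simp [exp_zero]
  ring

lemma prod_range_ascFactorial (c m : ℕ) :
    ∏ j ∈ Finset.range m, (c + j) = c.ascFactorial m := by
  induction m with
  | zero => simp
  | succ m ih => rw [Finset.prod_range_succ, ih, Nat.ascFactorial_succ, mul_comm]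

lemma integral_aux (k : ℕ) : ∀ {a : ℝ}, 0 < a →
    ∫ t in Set.Ioi (0:ℝ), (1 - exp (-t)) ^ k * exp (-a * t)
      = k.factorial / ∏ j ∈ Finset.range (k+1), (a + j) := by
  induction k with
  | zero =>
    intro a ha
    simp only [pow_zero, one_mul, Nat.factorial_zero, Nat.cast_one]
    rw [integral_exp_neg_mul ha]
    simp
  | succ k ih =>
    intro a ha
    have ha1 : (0:ℝ) < a + 1 := by linarith
    have key : ∀ t : ℝ, (1 - exp (-t)) ^ (k+1) * exp (-a * t)
        = (1 - exp (-t)) ^ k * exp (-a * t) - (1 - exp (-t)) ^ k * exp (-(a+1) * t) := by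
      intro t
      have he : exp (-(a+1) * t) = exp (-t) * exp (-a * t) := by
        rw [← Real.exp_add]; ring_nf
      rw [pow_succ, he]; ring
    rw [MeasureTheory.setIntegral_congr_fun measurableSet_Ioi (fun t _ => key t),
      MeasureTheory.integral_sub (integrableOn_aux k ha) (integrableOn_aux k ha1),
      ih ha, ih ha1]
    -- algebra
    have hposP : ∀ m : ℕ, (0:ℝ) < ∏ j ∈ Finset.range m, (a + j) := by
      intro m
      apply Finset.prod_pos
      intro j _
      positivity
    have hposQ : ∀ m : ℕ, (0:ℝ) < ∏ j ∈ Finset.range m, (a + 1 + j) := by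
      intro m
      apply Finset.prod_pos
      intro j _
      positivity
    have e1 : (∏ j ∈ Finset.range (k+2), (a + (j:ℝ)))
        = (∏ j ∈ Finset.range (k+1), (a + (j:ℝ))) * (a + ((k:ℝ)+1)) := by
      rw [Finset.prod_range_succ]; push_cast; ring
    have e2 : (∏ j ∈ Finset.range (k+2), (a + (j:ℝ)))
        = a * ∏ j ∈ Finset.range (k+1), (a + 1 + (j:ℝ)) := by
      calc ∏ j ∈ Finset.range (k+2), (a + (j:ℝ))
          = (∏ j ∈ Finset.range (k+1), (a + ((j+1:ℕ):ℝ))) * (a + ((0:ℕ):ℝ)) :=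
            Finset.prod_range_succ' _ _
        _ = a * ∏ j ∈ Finset.range (k+1), (a + 1 + (j:ℝ)) := by
            rw [show (∏ j ∈ Finset.range (k+1), (a + ((j+1:ℕ):ℝ)))
                = ∏ j ∈ Finset.range (k+1), (a + 1 + (j:ℝ)) from
              Finset.prod_congr rfl (fun j _ => by push_cast; ring)]
            push_cast; ring
    rw [div_sub_div _ _ (ne_of_gt (hposP (k+1))) (ne_of_gt (hposQ (k+1)))]
    rw [div_eq_div_iff (by positivity) (ne_of_gt (hposP (k+2)))]
    push_cast [Nat.factorial_succ]
    linear_combination ((k.factorial : ℝ) * (∏ j ∈ Finset.range (k+1), (a + 1 + (j:ℝ)))) * e1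
      - ((k.factorial : ℝ) * (∏ j ∈ Finset.range (k+1), (a + (j:ℝ)))) * e2

lemma choose_identity {n k : ℕ} (hk : k < n) :
    (n.choose k : ℝ) * ((k.factorial : ℝ)
        / ∏ j ∈ Finset.range (k+1), (((n-k:ℕ):ℝ) + (j:ℝ)))
      = 1 / ((n:ℝ) - k) := by
  have hnk : 0 < n - k := Nat.sub_pos_of_lt hk
  have hA : (∏ j ∈ Finset.range (k+1), ((n-k) + j)) = (n-k).ascFactorial (k+1) :=
    prod_range_ascFactorial _ _
  have h1 : (n-k-1).factorial * (n-k).ascFactorial (k+1) = n.factorial := by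
    have h := Nat.factorial_mul_ascFactorial' (n-k) (k+1) hnk
    rw [h]
    congr 1
    omega
  have h2 : n.choose k * k.factorial * (n-k).factorial = n.factorial :=
    Nat.choose_mul_factorial_mul_factorial hk.le
  have h3 : (n-k) * (n-k-1).factorial = (n-k).factorial := Nat.mul_factorial_pred hnk.ne'
  have hcastA : (∏ j ∈ Finset.range (k+1), (((n-k:ℕ):ℝ) + (j:ℝ)))
      = (((n-k).ascFactorial (k+1) : ℕ) : ℝ) := by
    rw [← hA]
    push_cast
    rfl
  have hc : ((n:ℝ) - k) = ((n-k:ℕ):ℝ) := by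
    rw [Nat.cast_sub hk.le]
  rw [hcastA, hc]
  have hApos : (0:ℝ) < (((n-k).ascFactorial (k+1) : ℕ) : ℝ) := by
    have : 0 < (n-k).ascFactorial (k+1) := by
      rw [← hA]
      apply Finset.prod_pos
      intro i _
      omega
    exact_mod_cast this
  have hcpos : (0:ℝ) < ((n-k:ℕ):ℝ) := by exact_mod_cast hnk
  have hfpos : (0:ℝ) < ((n-k-1).factorial : ℝ) := by exact_mod_cast (n-k-1).factorial_pos
  have hA0 : (((n-k).ascFactorial (k+1) : ℕ) : ℝ) ≠ 0 := ne_of_gt hApos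
  have hc0 : ((n-k:ℕ):ℝ) ≠ 0 := ne_of_gt hcpos
  have h1' : ((n-k-1).factorial : ℝ) * (((n-k).ascFactorial (k+1) : ℕ) : ℝ)
      = (n.factorial : ℝ) := by exact_mod_cast h1
  have h2' : (n.choose k : ℝ) * (k.factorial : ℝ) * ((n-k).factorial : ℝ)
      = (n.factorial : ℝ) := by exact_mod_cast h2
  have h3' : ((n-k:ℕ):ℝ) * ((n-k-1).factorial : ℝ) = ((n-k).factorial : ℝ) := by
    exact_mod_cast h3
  field_simp
  apply mul_right_cancel₀ (ne_of_gt hfpos)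
  linear_combination ((n.choose k : ℝ) * (k.factorial : ℝ)) * h3' + h2' - h1'

lemma integral_orderStat {n : ℕ} (j : Fin n) :
    ∫ x, orderStat x j ∂(Measure.pi fun _ : Fin n => expMeasure 1)
      = ∑ k ∈ Finset.range (j.1+1), 1 / ((n:ℝ) - k) := by
  have hnn : 0 ≤ᵐ[Measure.pi fun _ : Fin n => expMeasure 1] fun x => orderStat x j :=
    ae_nonneg_pi.mono (fun x hx => orderStat_nonneg hx j)
  rw [(integrable_orderStat j).integral_eq_integral_meas_lt hnn]
  have hpos : ∀ k ∈ Finset.range (j.1+1), (0:ℝ) < ((n-k:ℕ):ℝ) := by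
    intro k hk
    have : k < n := lt_of_le_of_lt (Nat.lt_succ_iff.mp (Finset.mem_range.mp hk)) j.isLt
    exact_mod_cast Nat.sub_pos_of_lt this
  have hcongr : ∀ t ∈ Set.Ioi (0:ℝ),
      ENNReal.toReal ((Measure.pi fun _ : Fin n => expMeasure 1) {x | t < orderStat x j})
      = ∑ k ∈ Finset.range (j.1+1),
          (n.choose k : ℝ) * ((1 - exp (-t)) ^ k * exp (-((n-k:ℕ):ℝ) * t)) := by
    intro t ht
    have ht' : (0:ℝ) ≤ t := le_of_lt ht
    have h1 : 0 ≤ 1 - exp (-t) := by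
      have := exp_le_one_iff.mpr (by linarith : -t ≤ 0); linarith
    rw [measure_orderStat_gt j ht']
    rw [ENNReal.toReal_sum (fun k _ => by
      apply ENNReal.mul_ne_top
      apply ENNReal.mul_ne_top
      · exact ENNReal.natCast_ne_top _
      · exact ENNReal.pow_ne_top ENNReal.ofReal_ne_top
      · exact ENNReal.pow_ne_top ENNReal.ofReal_ne_top)]
    apply Finset.sum_congr rfl
    intro k hk
    rw [ENNReal.toReal_mul, ENNReal.toReal_mul, ENNReal.toReal_pow, ENNReal.toReal_pow,
      ENNReal.toReal_natCast, ENNReal.toReal_ofReal h1, ENNReal.toReal_ofReal (exp_nonneg _)]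
    have : exp (-t) ^ (n - k) = exp (-((n-k:ℕ):ℝ) * t) := by
      rw [← Real.exp_nat_mul]
      congr 1
      push_cast
      ring
    rw [this, mul_assoc]
  rw [MeasureTheory.setIntegral_congr_fun measurableSet_Ioi
    (f := fun t => (Measure.pi fun _ : Fin n => expMeasure 1).real {a | t < orderStat a j}) hcongr,
    MeasureTheory.integral_finset_sum _ (fun k hk =>
      ((integrableOn_aux k (hpos k hk)).const_mul _))]
  apply Finset.sum_congr rfl
  intro k hk
  have hkn : k < n := lt_of_le_of_lt (Nat.lt_succ_iff.mp (Finset.mem_range.mp hk)) j.isLt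
  rw [MeasureTheory.integral_const_mul, integral_aux k (hpos k hk)]
  exact choose_identity hkn

lemma measurable_logb2 : Measurable (Real.logb 2) :=
  Real.measurable_log.div_const _

lemma integrable_logb_aux {β : Type*} [MeasurableSpace β] {μ : Measure β} {g : β → ℝ}
    (hgm : Measurable g) (hg : Integrable g μ) (hg0 : 0 ≤ᵐ[μ] g) {c : ℝ} (hc : 0 ≤ c) :
    Integrable (fun a => Real.logb 2 (1 + c * g a)) μ := by
  apply MeasureTheory.Integrable.mono (hg.const_mul (c / Real.log 2))
  · exact (measurable_logb2.comp ((hgm.const_mul c).const_add 1)).aestronglyMeasurable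
  · filter_upwards [hg0] with a ha
    have ha' : (0:ℝ) ≤ g a := ha
    have h1 : (0:ℝ) ≤ Real.logb 2 (1 + c * g a) :=
      Real.logb_nonneg (by norm_num) (by nlinarith)
    have hpos : (0:ℝ) < 1 + c * g a := by nlinarith
    have h2 : Real.logb 2 (1 + c * g a) ≤ c / Real.log 2 * g a := by
      rw [Real.logb, div_le_iff₀ (Real.log_pos (by norm_num))]
      calc Real.log (1 + c * g a) ≤ (1 + c * g a) - 1 := Real.log_le_sub_one_of_pos hpos
        _ = c * g a := by ring
        _ = c / Real.log 2 * g a * Real.log 2 := by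
            field_simp
    rw [Real.norm_eq_abs, Real.norm_eq_abs, abs_of_nonneg h1]
    exact h2.trans (le_abs_self _)

lemma jensen_logb {β : Type*} [MeasurableSpace β] {μ : Measure β} [IsProbabilityMeasure μ]
    {g : β → ℝ} (hgm : Measurable g) (hg : Integrable g μ) (hg0 : 0 ≤ᵐ[μ] g)
    {c : ℝ} (hc : 0 ≤ c) :
    ∫ a, Real.logb 2 (1 + c * g a) ∂μ ≤ Real.logb 2 (1 + c * ∫ a, g a ∂μ) := by
  set m := ∫ a, g a ∂μ with hm
  have hm0 : 0 ≤ m := integral_nonneg_of_ae hg0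
  have hden : (0:ℝ) < 1 + c * m := by nlinarith
  have hlog2 : (0:ℝ) < Real.log 2 := Real.log_pos (by norm_num)
  set D : ℝ := (1 + c * m) * Real.log 2 with hD
  have hDpos : 0 < D := mul_pos hden hlog2
  set F : β → ℝ := fun a => (Real.logb 2 (1 + c * m) - c * m / D) + (c / D) * g a with hF
  have hFint : Integrable F μ :=
    (integrable_const _).add (hg.const_mul _)
  have hptwise : ∀ᵐ a ∂μ, Real.logb 2 (1 + c * g a) ≤ F a := by
    filter_upwards [hg0] with a ha
    have ha' : (0:ℝ) ≤ g a := ha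
    have hx : (0:ℝ) < 1 + c * g a := by nlinarith
    have hq : (0:ℝ) < (1 + c * g a) / (1 + c * m) := div_pos hx hden
    have hlog : Real.log (1 + c * g a) - Real.log (1 + c * m)
        ≤ (c * g a - c * m) / (1 + c * m) := by
      have h := Real.log_le_sub_one_of_pos hq
      rw [Real.log_div (ne_of_gt hx) (ne_of_gt hden)] at h
      calc Real.log (1 + c * g a) - Real.log (1 + c * m)
          ≤ (1 + c * g a) / (1 + c * m) - 1 := h
        _ = (c * g a - c * m) / (1 + c * m) := by field_simp; ring
    have : Real.logb 2 (1 + c * g a) - Real.logb 2 (1 + c * m)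
        ≤ (c * g a - c * m) / D := by
      rw [Real.logb, Real.logb, div_sub_div_same, hD]
      rw [div_le_div_iff₀ hlog2 hDpos]
      calc (Real.log (1 + c * g a) - Real.log (1 + c * m)) * ((1 + c * m) * Real.log 2)
          ≤ ((c * g a - c * m) / (1 + c * m)) * ((1 + c * m) * Real.log 2) := by
            apply mul_le_mul_of_nonneg_right hlog (le_of_lt hDpos)
        _ = (c * g a - c * m) * Real.log 2 := by field_simp; try ring
    have hexp : (c * g a - c * m) / D = (c / D) * g a - c * m / D := by
      field_simp
      try ring
    simp only [hF]
    linarith [this, hexp ▸ this]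
  have hint : ∫ a, F a ∂μ = Real.logb 2 (1 + c * m) := by
    rw [hF, MeasureTheory.integral_add (integrable_const _) (hg.const_mul _),
      MeasureTheory.integral_const, MeasureTheory.integral_const_mul, probReal_univ]
    simp only [ENNReal.toReal_one, one_smul, ← hm]
    field_simp
    ring
  calc ∫ a, Real.logb 2 (1 + c * g a) ∂μ ≤ ∫ a, F a ∂μ := by
        apply integral_mono_of_nonneg _ hFint hptwise
        filter_upwards [hg0] with a ha
        have ha' : (0:ℝ) ≤ g a := ha
        exact Real.logb_nonneg (by norm_num) (by nlinarith)
    _ = Real.logb 2 (1 + c * m) := hint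

/-- **Proposition 4 of the paper (refined Jensen upper bound `C_Jen2`).** Pairing the
nonincreasing coefficients `αᵢ` with the ascending order statistics of i.i.d. standard
exponential vectors of lengths `P` and `L`. -/
theorem ergodic_capacity_ordered_jensen_bound (P L N : ℕ)
    (hP : 0 < P) (hL : 0 < L) (hN : 0 < N) (hNmin : N ≤ min P L)
    (α : Fin N → ℝ) (hα0 : ∀ i, 0 ≤ α i) (hα : Antitone α) :
    ∑ i : Fin N,
        ∫ x, ∫ y, Real.logb 2
            (1 + α i * orderStat x (Fin.castLE (hNmin.trans (min_le_left P L)) i)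
                     * orderStat y (Fin.castLE (hNmin.trans (min_le_right P L)) i))
          ∂(Measure.pi fun _ : Fin L => expMeasure 1)
          ∂(Measure.pi fun _ : Fin P => expMeasure 1)
      ≤ ∑ i : Fin N, Real.logb 2
          (1 + α i * (∑ j ∈ Finset.range (i.1 + 1), 1 / ((P : ℝ) - j))
                   * (∑ j ∈ Finset.range (i.1 + 1), 1 / ((L : ℝ) - j))) := by
  apply Finset.sum_le_sum
  intro i _
  set jP : Fin P := Fin.castLE (hNmin.trans (min_le_left P L)) i with hjP
  set jL : Fin L := Fin.castLE (hNmin.trans (min_le_right P L)) i with hjL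
  set SP : ℝ := ∑ j ∈ Finset.range (i.1 + 1), 1 / ((P : ℝ) - j) with hSPdef
  set SL : ℝ := ∑ j ∈ Finset.range (i.1 + 1), 1 / ((L : ℝ) - j) with hSLdef
  have hSP : ∫ x, orderStat x jP ∂(Measure.pi fun _ : Fin P => expMeasure 1) = SP := by
    rw [integral_orderStat jP]
    rfl
  have hSL : ∫ y, orderStat y jL ∂(Measure.pi fun _ : Fin L => expMeasure 1) = SL := by
    rw [integral_orderStat jL]
    rfl
  have hSPnn : 0 ≤ SP := by
    rw [← hSP]
    exact integral_nonneg_of_ae (ae_nonneg_pi.mono (fun x hx => orderStat_nonneg hx jP))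
  have hSLnn : 0 ≤ SL := by
    rw [← hSL]
    exact integral_nonneg_of_ae (ae_nonneg_pi.mono (fun y hy => orderStat_nonneg hy jL))
  have hOSnnL : 0 ≤ᵐ[Measure.pi fun _ : Fin L => expMeasure 1] fun y => orderStat y jL :=
    ae_nonneg_pi.mono (fun y hy => orderStat_nonneg hy jL)
  have hOSnnP : 0 ≤ᵐ[Measure.pi fun _ : Fin P => expMeasure 1] fun x => orderStat x jP :=
    ae_nonneg_pi.mono (fun x hx => orderStat_nonneg hx jP)
  calc ∫ x, ∫ y, Real.logb 2 (1 + α i * orderStat x jP * orderStat y jL)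
          ∂(Measure.pi fun _ : Fin L => expMeasure 1)
          ∂(Measure.pi fun _ : Fin P => expMeasure 1)
      ≤ ∫ x, Real.logb 2 (1 + (α i * SL) * orderStat x jP)
          ∂(Measure.pi fun _ : Fin P => expMeasure 1) := by
        apply integral_mono_of_nonneg
        · filter_upwards [ae_nonneg_pi] with x hx
          apply integral_nonneg_of_ae
          filter_upwards [hOSnnL] with y hy
          have hy' : (0:ℝ) ≤ orderStat y jL := hy
          have hx' : (0:ℝ) ≤ orderStat x jP := orderStat_nonneg hx jP
          exact Real.logb_nonneg (by norm_num)
            (by nlinarith [mul_nonneg (mul_nonneg (hα0 i) hx') hy'])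
        · exact integrable_logb_aux (measurable_orderStat jP) (integrable_orderStat jP)
            hOSnnP (mul_nonneg (hα0 i) hSLnn)
        · filter_upwards [ae_nonneg_pi] with x hx
          have hx' : (0:ℝ) ≤ orderStat x jP := orderStat_nonneg hx jP
          have hc : 0 ≤ α i * orderStat x jP := mul_nonneg (hα0 i) hx'
          have h := jensen_logb (measurable_orderStat jL) (integrable_orderStat jL)
            hOSnnL hc
          rw [hSL] at h
          calc ∫ y, Real.logb 2 (1 + α i * orderStat x jP * orderStat y jL)
                  ∂(Measure.pi fun _ : Fin L => expMeasure 1)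
              ≤ Real.logb 2 (1 + α i * orderStat x jP * SL) := h
            _ = Real.logb 2 (1 + (α i * SL) * orderStat x jP) := by ring_nf
    _ ≤ Real.logb 2 (1 + (α i * SL) * SP) := by
        have h := jensen_logb (measurable_orderStat jP) (integrable_orderStat jP)
          hOSnnP (mul_nonneg (hα0 i) hSLnn)
        rw [hSP] at h
        exact h
    _ = Real.logb 2 (1 + α i * SP * SL) := by ring_nf
end

section
/- Let n ≥ 1 and let a₁, …, a_n and b₁, …, b_n be nonnegative real numbers with 0 ≤ a₁ ≤ a₂ ≤ … ≤ a_n and 0 ≤ b₁ ≤ b₂ ≤ … ≤ b_n, and let θ be any permutation of {1, 2, …, n}. Then ∏_{k=1}^n (1 + a_k b_{n−k+1}) ≤ ∏_{k=1}^n (1 + a_k b_{θ(k)}) ≤ ∏_{k=1}^n (1 + a_k b_k). -/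
open Finset

private lemma key_swap_ineq (x X y Y : ℝ) (hx : 0 ≤ x) (hX : 0 ≤ X) (hy : 0 ≤ y) (hY : 0 ≤ Y)
    (hxX : x ≤ X) (hyY : y ≤ Y) :
    (1 + X * y) * (1 + x * Y) ≤ (1 + x * y) * (1 + X * Y) := by
  nlinarith [mul_nonneg (sub_nonneg.2 hxX) (sub_nonneg.2 hyY)]

private lemma prod_one_add_pos_aux {ι : Type*} (f : ι → ℝ) (hf : ∀ i, 0 ≤ f i)
    (s : Finset ι) : (0:ℝ) ≤ ∏ i ∈ s, (1 + f i) :=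
  Finset.prod_nonneg fun i _ => by nlinarith [hf i]

theorem monovaryOn_prod_one_add {ι : Type*} [DecidableEq ι] {s : Finset ι} {σ : Equiv.Perm ι}
    {f g : ι → ℝ} (hf : ∀ i, 0 ≤ f i) (hg : ∀ i, 0 ≤ g i)
    (hfg : MonovaryOn f g s) (hσ : {x | σ x ≠ x} ⊆ s) :
    ∏ i ∈ s, (1 + f i * g (σ i)) ≤ ∏ i ∈ s, (1 + f i * g i) := by
  classical
  revert hσ σ hfg
  apply Finset.induction_on_max_value (fun i ↦ toLex (g i, f i))
    (motive := fun t ↦ ∀ {σ : Equiv.Perm ι}, MonovaryOn f g t → {x | σ x ≠ x} ⊆ t →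
      ∏ i ∈ t, (1 + f i * g (σ i)) ≤ ∏ i ∈ t, (1 + f i * g i)) s
  · simp only [le_rfl, Finset.prod_empty, imp_true_iff]
  intro a s has hamax hind σ hfg hσ
  set τ : Equiv.Perm ι := σ.trans (Equiv.swap a (σ a)) with hτ
  have hτs : {x | τ x ≠ x} ⊆ s := by
    intro x hx
    simp only [τ, Ne, Set.mem_setOf_eq, Equiv.coe_trans, Equiv.swap_comp_apply] at hx
    split_ifs at hx with h₁ h₂
    · obtain rfl | hax := eq_or_ne x a
      · contradiction
      · exact mem_of_mem_insert_of_ne (hσ fun h ↦ hax <| h.symm.trans h₁) hax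
    · exact (hx <| σ.injective h₂.symm).elim
    · exact mem_of_mem_insert_of_ne (hσ hx) (ne_of_apply_ne _ h₂)
  specialize hind (hfg.subset <| subset_insert _ _) hτs
  simp_rw [prod_insert has]
  have hfa : (0:ℝ) ≤ 1 + f a * g a := by nlinarith [mul_nonneg (hf a) (hg a)]
  refine le_trans ?_ (mul_le_mul_of_nonneg_left hind hfa)
  obtain hσa | hσa := eq_or_ne a (σ a)
  · rw [hτ, ← hσa, Equiv.swap_self, Equiv.trans_refl]
  have h1s : σ⁻¹ a ∈ s := by
    rw [Ne, ← Equiv.Perm.inv_eq_iff_eq] at hσa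
    refine mem_of_mem_insert_of_ne (hσ fun h ↦ hσa ?_) hσa
    rwa [show σ (σ⁻¹ a) = a from (Equiv.eq_symm_apply σ).mp rfl, eq_comm] at h
  -- split off σ⁻¹ a on both sides
  rw [← Finset.mul_prod_erase s (fun i => (1 + f i * g (σ i))) h1s,
      ← Finset.mul_prod_erase s (fun i => (1 + f i * g (τ i))) h1s]
  have hτj : τ (σ⁻¹ a) = σ a := by
    simp [hτ, Equiv.swap_apply_left]
  have hσj : σ (σ⁻¹ a) = a := (Equiv.eq_symm_apply σ).mp rfl
  rw [hτj, hσj]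
  have hrest : ∀ x ∈ s.erase (σ⁻¹ a), (1 + f x * g (σ x)) = (1 + f x * g (τ x)) := by
    intro x hx
    rw [mem_erase, Ne, Equiv.Perm.eq_inv_iff_eq] at hx
    have hτx : τ x = σ x := by
      rw [hτ]
      simp only [Equiv.trans_apply]
      exact Equiv.swap_apply_of_ne_of_ne hx.1 (σ.injective.ne fun h => has (h ▸ hx.2))
    rw [hτx]
  rw [Finset.prod_congr rfl hrest]
  have hrest0 : (0:ℝ) ≤ ∏ x ∈ s.erase (σ⁻¹ a), (1 + f x * g (τ x)) :=
    Finset.prod_nonneg fun i _ => by nlinarith [mul_nonneg (hf i) (hg (τ i))]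
  rw [← mul_assoc, ← mul_assoc]
  refine mul_le_mul_of_nonneg_right ?_ hrest0
  -- key inequality
  have hfj : f (σ⁻¹ a) ≤ f a := by
    specialize hamax (σ⁻¹ a) h1s
    rw [Prod.Lex.le_iff] at hamax
    rcases hamax with hamax | hamax
    · exact hfg (mem_insert_of_mem h1s) (mem_insert_self _ _) hamax
    · exact hamax.2
  have hgσa : g (σ a) ≤ g a := by
    specialize hamax (σ a) (mem_of_mem_insert_of_ne (hσ <| σ.injective.ne hσa.symm) hσa.symm)
    rw [Prod.Lex.le_iff] at hamax
    rcases hamax with hamax | hamax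
    · exact hamax.le
    · exact hamax.1.le
  calc (1 + f a * g (σ a)) * (1 + f (σ⁻¹ a) * g a)
      ≤ (1 + f (σ⁻¹ a) * g (σ a)) * (1 + f a * g a) :=
        key_swap_ineq _ _ _ _ (hf _) (hf _) (hg _) (hg _) hfj hgσa
    _ = (1 + f a * g a) * (1 + f (σ⁻¹ a) * g (σ a)) := by ring

theorem antivaryOn_prod_one_add {ι : Type*} [DecidableEq ι] {s : Finset ι} {σ : Equiv.Perm ι}
    {f g : ι → ℝ} (hf : ∀ i, 0 ≤ f i) (hg : ∀ i, 0 ≤ g i)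
    (hfg : AntivaryOn f g s) (hσ : {x | σ x ≠ x} ⊆ s) :
    ∏ i ∈ s, (1 + f i * g i) ≤ ∏ i ∈ s, (1 + f i * g (σ i)) := by
  classical
  revert hσ σ hfg
  apply Finset.induction_on_max_value (fun i ↦ toLex (OrderDual.toDual (g i), f i))
    (motive := fun t ↦ ∀ {σ : Equiv.Perm ι}, AntivaryOn f g t → {x | σ x ≠ x} ⊆ t →
      ∏ i ∈ t, (1 + f i * g i) ≤ ∏ i ∈ t, (1 + f i * g (σ i))) s
  · simp only [le_rfl, Finset.prod_empty, imp_true_iff]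
  intro a s has hamax hind σ hfg hσ
  set τ : Equiv.Perm ι := σ.trans (Equiv.swap a (σ a)) with hτ
  have hτs : {x | τ x ≠ x} ⊆ s := by
    intro x hx
    simp only [τ, Ne, Set.mem_setOf_eq, Equiv.coe_trans, Equiv.swap_comp_apply] at hx
    split_ifs at hx with h₁ h₂
    · obtain rfl | hax := eq_or_ne x a
      · contradiction
      · exact mem_of_mem_insert_of_ne (hσ fun h ↦ hax <| h.symm.trans h₁) hax
    · exact (hx <| σ.injective h₂.symm).elim
    · exact mem_of_mem_insert_of_ne (hσ hx) (ne_of_apply_ne _ h₂)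
  specialize hind (hfg.subset <| subset_insert _ _) hτs
  simp_rw [prod_insert has]
  have hfa : (0:ℝ) ≤ 1 + f a * g a := by nlinarith [mul_nonneg (hf a) (hg a)]
  refine le_trans (mul_le_mul_of_nonneg_left hind hfa) ?_
  obtain hσa | hσa := eq_or_ne a (σ a)
  · rw [hτ, ← hσa, Equiv.swap_self, Equiv.trans_refl]
  have h1s : σ⁻¹ a ∈ s := by
    rw [Ne, ← Equiv.Perm.inv_eq_iff_eq] at hσa
    refine mem_of_mem_insert_of_ne (hσ fun h ↦ hσa ?_) hσa
    rwa [show σ (σ⁻¹ a) = a from (Equiv.eq_symm_apply σ).mp rfl, eq_comm] at h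
  rw [← Finset.mul_prod_erase s (fun i => (1 + f i * g (σ i))) h1s,
      ← Finset.mul_prod_erase s (fun i => (1 + f i * g (τ i))) h1s]
  have hτj : τ (σ⁻¹ a) = σ a := by
    simp [hτ, Equiv.swap_apply_left]
  have hσj : σ (σ⁻¹ a) = a := (Equiv.eq_symm_apply σ).mp rfl
  rw [hτj, hσj]
  have hrest : ∀ x ∈ s.erase (σ⁻¹ a), (1 + f x * g (τ x)) = (1 + f x * g (σ x)) := by
    intro x hx
    rw [mem_erase, Ne, Equiv.Perm.eq_inv_iff_eq] at hx
    have hτx : τ x = σ x := by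
      rw [hτ]
      simp only [Equiv.trans_apply]
      exact Equiv.swap_apply_of_ne_of_ne hx.1 (σ.injective.ne fun h => has (h ▸ hx.2))
    rw [hτx]
  rw [Finset.prod_congr rfl hrest]
  have hrest0 : (0:ℝ) ≤ ∏ x ∈ s.erase (σ⁻¹ a), (1 + f x * g (σ x)) :=
    Finset.prod_nonneg fun i _ => by nlinarith [mul_nonneg (hf i) (hg (σ i))]
  rw [← mul_assoc, ← mul_assoc]
  refine mul_le_mul_of_nonneg_right ?_ hrest0
  have hfj : f (σ⁻¹ a) ≤ f a := by
    specialize hamax (σ⁻¹ a) h1s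
    rw [Prod.Lex.le_iff] at hamax
    rcases hamax with hamax | hamax
    · exact hfg (mem_insert_self _ _) (mem_insert_of_mem h1s) hamax
    · exact hamax.2
  have hgσa : g a ≤ g (σ a) := by
    specialize hamax (σ a) (mem_of_mem_insert_of_ne (hσ <| σ.injective.ne hσa.symm) hσa.symm)
    rw [Prod.Lex.le_iff] at hamax
    rcases hamax with hamax | hamax
    · exact hamax.le
    · exact (OrderDual.toDual_inj.1 hamax.1).ge
  calc (1 + f a * g a) * (1 + f (σ⁻¹ a) * g (σ a))
      ≤ (1 + f (σ⁻¹ a) * g a) * (1 + f a * g (σ a)) :=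
        key_swap_ineq _ _ _ _ (hf _) (hf _) (hg _) (hg _) hfj hgσa
    _ = (1 + f a * g (σ a)) * (1 + f (σ⁻¹ a) * g a) := by ring

/-- **Multiplicative rearrangement inequality (Section III-B of the paper).** For similarly
ordered nonnegative sequences `a` and `b` and any permutation `θ`, the oppositely ordered
pairing minimizes and the similarly ordered pairing maximizes `∏ (1 + aₖ b_{θ(k)})`.
Here `Fin.rev k` plays the role of the index `n - k + 1`. -/
theorem prod_one_add_mul_rearrangement (n : ℕ) (hn : 1 ≤ n)
    (a b : Fin n → ℝ) (ha0 : ∀ k, 0 ≤ a k) (hb0 : ∀ k, 0 ≤ b k)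
    (ha : Monotone a) (hb : Monotone b) (θ : Equiv.Perm (Fin n)) :
    ∏ k, (1 + a k * b k.rev) ≤ ∏ k, (1 + a k * b (θ k)) ∧
    ∏ k, (1 + a k * b (θ k)) ≤ ∏ k, (1 + a k * b k) := by
  constructor
  · -- lower bound: use antivary version with g = b ∘ rev and σ k = (θ k).rev
    have hc : Antitone (fun k : Fin n => b k.rev) :=
      fun i j hij => hb (Fin.rev_le_rev.2 hij)
    have hav : AntivaryOn a (fun k : Fin n => b k.rev) (Finset.univ : Finset (Fin n)) :=
      (ha.antivary hc).antivaryOn _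
    have := antivaryOn_prod_one_add (σ := θ.trans (Fin.revPerm))
      ha0 (fun k => hb0 k.rev) hav (by simp)
    simpa using this
  · have hmv : MonovaryOn a b (Finset.univ : Finset (Fin n)) := (ha.monovary hb).monovaryOn _
    have := monovaryOn_prod_one_add (σ := θ) ha0 hb0 hmv (by simp)
    simpa using this
end

section
/- Let N_u, N_b, L, P be positive integers. Let A_u ∈ ℂ^{N_u×L}, X ∈ ℂ^{L×P}, A_b ∈ ℂ^{N_b×P}, let T = diag(t) with t ∈ ℂ^L, let G = diag(g) with g ∈ ℂ^P, and let Q ∈ ℂ^{N_b×N_b} be Hermitian positive semidefinite. Define H = A_u T X G A_bᴴ ∈ ℂ^{N_u×N_b}. Then for every integer k with 1 ≤ k ≤ min(N_u, L, P), ∏_{i=1}^k λ_i(H Q Hᴴ) ≤ ∏_{i=1}^k λ_i(A_uᴴ A_u) · λ_i(A_bᴴ Q A_b) · λ_i(Xᴴ X) · λ_i(Gᴴ G) · λ_i(Tᴴ T). -/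
open Matrix Finset

open scoped ComplexOrder

/-- The eigenvalues of a Hermitian matrix arranged in nonincreasing order:
`eigDesc hA 0 ≥ eigDesc hA 1 ≥ …`. -/
noncomputable def eigDesc {n : ℕ} {A : Matrix (Fin n) (Fin n) ℂ} (hA : A.IsHermitian) :
    Fin n → ℝ :=
  fun i => hA.eigenvalues (Tuple.sort hA.eigenvalues i.rev)

section Auxiliary

open Equiv

variable {R : Type*} [CommRing R]

/-- Step 1: column expansion of `det (A * B)` over all functions. -/
theorem det_mul_expand {k n : ℕ} (A : Matrix (Fin k) (Fin n) R) (B : Matrix (Fin n) (Fin k) R) :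
    det (A * B) = ∑ p : Fin k → Fin n, det (A.submatrix id p) * ∏ i, B (p i) i := by
  calc
    det (A * B) = ∑ σ : Perm (Fin k), Perm.sign σ • ∏ i, ∑ j, A (σ i) j * B j i := by
      simp only [det_apply, mul_apply]
    _ = ∑ σ : Perm (Fin k), Perm.sign σ •
          ∑ p ∈ Fintype.piFinset (fun _ : Fin k => (univ : Finset (Fin n))),
            ∏ i, A (σ i) (p i) * B (p i) i := by
      simp only [Finset.prod_univ_sum]
    _ = ∑ p : Fin k → Fin n, ∑ σ : Perm (Fin k),
          Perm.sign σ • ∏ i, A (σ i) (p i) * B (p i) i := by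
      rw [Finset.sum_comm]
      simp only [Fintype.piFinset_univ, smul_sum]
    _ = ∑ p : Fin k → Fin n, det (A.submatrix id p) * ∏ i, B (p i) i := by
      refine Finset.sum_congr rfl fun p _ => ?_
      rw [det_apply]
      rw [Finset.sum_mul]
      refine Finset.sum_congr rfl fun σ _ => ?_
      rw [Finset.prod_mul_distrib]
      simp only [submatrix_apply, id_eq]
      rw [smul_mul_assoc, mul_comm]

/-- enumeration of a `k`-subset of `Fin n` in increasing order -/
noncomputable def enumOf {n k : ℕ} (S : {s : Finset (Fin n) // s ∈ (univ : Finset (Fin n)).powersetCard k}) :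
    Fin k → Fin n :=
  ⇑(S.1.orderEmbOfFin (Finset.mem_powersetCard.mp S.2).2)

theorem enumOf_strictMono {n k : ℕ} (S : {s : Finset (Fin n) // s ∈ (univ : Finset (Fin n)).powersetCard k}) :
    StrictMono (enumOf S) := (S.1.orderEmbOfFin _).strictMono

theorem enumOf_injective {n k : ℕ} (S : {s : Finset (Fin n) // s ∈ (univ : Finset (Fin n)).powersetCard k}) :
    Function.Injective (enumOf S) := (enumOf_strictMono S).injective

theorem enumOf_mem {n k : ℕ} (S : {s : Finset (Fin n) // s ∈ (univ : Finset (Fin n)).powersetCard k})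
    (i : Fin k) : enumOf S i ∈ S.1 :=
  Finset.orderEmbOfFin_mem _ _ _

theorem image_enumOf {n k : ℕ} (S : {s : Finset (Fin n) // s ∈ (univ : Finset (Fin n)).powersetCard k}) :
    Finset.image (enumOf S) univ = S.1 := by
  apply Finset.eq_of_subset_of_card_le
  · intro x hx
    obtain ⟨i, _, rfl⟩ := Finset.mem_image.mp hx
    exact enumOf_mem S i
  · rw [(Finset.mem_powersetCard.mp S.2).2, Finset.card_image_of_injective _ (enumOf_injective S),
      Finset.card_univ, Fintype.card_fin]

/-- **Cauchy–Binet formula**. -/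
theorem det_mul_eq_sum_subsets {k n : ℕ} (A : Matrix (Fin k) (Fin n) R)
    (B : Matrix (Fin n) (Fin k) R) :
    det (A * B) = ∑ S ∈ ((univ : Finset (Fin n)).powersetCard k).attach,
      det (A.submatrix id (enumOf S)) * det (B.submatrix (enumOf S) id) := by
  rw [det_mul_expand]
  -- drop non-injective p
  rw [← Finset.sum_filter_add_sum_filter_not (univ : Finset (Fin k → Fin n))
    (fun p => Function.Injective p)]
  have hzero : ∑ p ∈ (univ : Finset (Fin k → Fin n)) with ¬ Function.Injective p,
      det (A.submatrix id p) * ∏ i, B (p i) i = 0 := by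
    refine Finset.sum_eq_zero fun p hp => ?_
    have hpni : ¬ Function.Injective p := (Finset.mem_filter.mp hp).2
    rw [Function.not_injective_iff] at hpni
    obtain ⟨i, j, hij, hne⟩ := hpni
    rw [Matrix.det_zero_of_column_eq hne (fun l => by simp [hij]), zero_mul]
  rw [hzero, add_zero]
  -- reindex injective p by (S, σ)
  have hbij : ∑ p ∈ (univ : Finset (Fin k → Fin n)) with Function.Injective p,
      det (A.submatrix id p) * ∏ i, B (p i) i
      = ∑ x ∈ ((univ : Finset (Fin n)).powersetCard k).attach ×ˢ (univ : Finset (Perm (Fin k))),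
          det (A.submatrix id (enumOf x.1 ∘ x.2)) * ∏ i, B ((enumOf x.1 ∘ x.2) i) i := by
    refine (Finset.sum_bij (fun x _ => enumOf x.1 ∘ x.2) ?_ ?_ ?_ ?_).symm
    · intro x _
      exact Finset.mem_filter.mpr ⟨Finset.mem_univ _,
        (enumOf_injective x.1).comp x.2.injective⟩
    · rintro ⟨S, σ⟩ _ ⟨S', σ'⟩ _ h
      simp only at h
      have himg : ∀ (T : {s : Finset (Fin n) // s ∈ (univ : Finset (Fin n)).powersetCard k})
          (τ : Perm (Fin k)), Finset.image (enumOf T ∘ τ) univ = T.1 := by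
        intro T τ
        rw [← image_enumOf T]
        ext x
        simp only [Finset.mem_image, Finset.mem_univ, true_and, Function.comp_apply]
        exact ⟨fun ⟨a, ha⟩ => ⟨τ a, ha⟩, fun ⟨a, ha⟩ => ⟨τ.symm a, by simpa using ha⟩⟩
      have hS : S = S' := Subtype.ext (by rw [← himg S σ, ← himg S' σ', h])
      subst hS
      have hσ : σ = σ' := Equiv.ext fun i => enumOf_injective S (congrFun h i)
      rw [hσ]
    · intro p hp
      have hpi : Function.Injective p := (Finset.mem_filter.mp hp).2
      have hcard : (Finset.image p univ).card = k := by
        rw [Finset.card_image_of_injective _ hpi, Finset.card_univ, Fintype.card_fin]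
      have hmem : Finset.image p univ ∈ (univ : Finset (Fin n)).powersetCard k :=
        Finset.mem_powersetCard.mpr ⟨Finset.subset_univ _, hcard⟩
      set S : {s : Finset (Fin n) // s ∈ (univ : Finset (Fin n)).powersetCard k} := ⟨_, hmem⟩
      -- bijections onto the subtype
      have hf₁ : Function.Bijective (fun i : Fin k => (⟨p i, Finset.mem_image_of_mem p (Finset.mem_univ i)⟩ : {x // x ∈ S.1})) := by
        rw [Fintype.bijective_iff_injective_and_card]
        constructor
        · intro a b hab
          exact hpi (congrArg Subtype.val hab)
        · rw [Fintype.card_fin, Fintype.card_coe, hcard]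
      have hf₂ : Function.Bijective (fun i : Fin k => (⟨enumOf S i, enumOf_mem S i⟩ : {x // x ∈ S.1})) := by
        rw [Fintype.bijective_iff_injective_and_card]
        constructor
        · intro a b hab
          exact enumOf_injective S (congrArg Subtype.val hab)
        · rw [Fintype.card_fin, Fintype.card_coe, hcard]
      refine ⟨⟨S, (Equiv.ofBijective _ hf₁).trans (Equiv.ofBijective _ hf₂).symm⟩,
        Finset.mem_product.mpr ⟨Finset.mem_attach _ _, Finset.mem_univ _⟩, ?_⟩
      funext i
      show enumOf S (((Equiv.ofBijective _ hf₁).trans (Equiv.ofBijective _ hf₂).symm) i) = p i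
      have := congrArg Subtype.val
        ((Equiv.ofBijective _ hf₂).apply_symm_apply ((Equiv.ofBijective _ hf₁) i))
      exact this
    · intros; rfl
  rw [hbij, Finset.sum_product]
  refine Finset.sum_congr rfl fun S _ => ?_
  -- inner sum over permutations gives the product of two determinants
  have hsub : ∀ σ : Perm (Fin k), A.submatrix id (enumOf S ∘ σ)
      = (A.submatrix id (enumOf S)).submatrix id σ := fun σ => rfl
  calc ∑ σ : Perm (Fin k), det (A.submatrix id (enumOf S ∘ ⇑σ)) * ∏ i, B ((enumOf S ∘ ⇑σ) i) i
      = det (A.submatrix id (enumOf S)) * ∑ σ : Perm (Fin k),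
          Perm.sign σ • ∏ i, (B.submatrix (enumOf S) id) (σ i) i := by
        rw [Finset.mul_sum]
        refine Finset.sum_congr rfl fun σ _ => ?_
        rw [hsub σ, Matrix.det_permute']
        simp only [Units.smul_def, zsmul_eq_mul, Function.comp_apply, submatrix_apply, id_eq]
        ring
    _ = det (A.submatrix id (enumOf S)) * det (B.submatrix (enumOf S) id) := by
        rw [← Matrix.det_apply]

open Complex in
/-- Expansion of `det (Vᴴ D V)` for a real diagonal `D`. -/
theorem det_conjTranspose_diag_mul {n k : ℕ} (d : Fin n → ℝ) (V : Matrix (Fin n) (Fin k) ℂ) :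
    det (Vᴴ * Matrix.diagonal (fun i => (d i : ℂ)) * V)
      = ((∑ S ∈ ((univ : Finset (Fin n)).powersetCard k).attach,
          (∏ i, d (enumOf S i)) * Complex.normSq (det (V.submatrix (enumOf S) id)) : ℝ) : ℂ) := by
  rw [det_mul_eq_sum_subsets]
  push_cast
  refine Finset.sum_congr rfl fun S _ => ?_
  have hsub : (Vᴴ * Matrix.diagonal (fun i => (d i : ℂ))).submatrix id (enumOf S)
      = (V.submatrix (enumOf S) id)ᴴ * Matrix.diagonal (fun j => (d (enumOf S j) : ℂ)) := by
    ext i j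
    simp [Matrix.mul_diagonal, Matrix.mul_apply, Matrix.diagonal_apply, Finset.mul_sum,
      Matrix.conjTranspose_apply]
  rw [hsub, Matrix.det_mul, Matrix.det_conjTranspose, Matrix.det_diagonal]
  have hz : star (det (V.submatrix (enumOf S) id)) * det (V.submatrix (enumOf S) id)
      = ((Complex.normSq (det (V.submatrix (enumOf S) id)) : ℝ) : ℂ) := by
    rw [Complex.star_def, ← Complex.normSq_eq_conj_mul_self]
  linear_combination (∏ i, ((d (enumOf S i)) : ℂ)) * hz

theorem det_conjTranspose_mul_self_expand {n k : ℕ} (V : Matrix (Fin n) (Fin k) ℂ) :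
    det (Vᴴ * V) = ((∑ S ∈ ((univ : Finset (Fin n)).powersetCard k).attach,
        Complex.normSq (det (V.submatrix (enumOf S) id)) : ℝ) : ℂ) := by
  have h := det_conjTranspose_diag_mul (fun _ => (1 : ℝ)) V
  simpa using h

theorem strictMono_fin_le {k n : ℕ} {s : Fin k → Fin n} (hs : StrictMono s) (i : Fin k) :
    (i : ℕ) ≤ (s i : ℕ) := by
  suffices h : ∀ m : ℕ, ∀ i : Fin k, (i : ℕ) = m → m ≤ (s i : ℕ) from h _ i rfl
  intro m
  induction m with
  | zero => intro i _; exact Nat.zero_le _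
  | succ m ih =>
    intro i him
    have hm : m < k := by omega
    have h1 : m ≤ (s ⟨m, hm⟩ : ℕ) := ih ⟨m, hm⟩ rfl
    have h2 : s ⟨m, hm⟩ < s i := hs (by simp [Fin.lt_def, him])
    have := Fin.lt_def.mp h2
    omega

theorem prod_comp_le {n k : ℕ} (hk : k ≤ n) (g : Fin n → ℝ) (hga : Antitone g)
    (hg0 : ∀ i, 0 ≤ g i) (q : Fin k → Fin n) (hq : Function.Injective q) :
    ∏ i, g (q i) ≤ ∏ i : Fin k, g (Fin.castLE hk i) := by
  have hcard : (Finset.image q univ).card = k := by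
    rw [Finset.card_image_of_injective _ hq, Finset.card_univ, Fintype.card_fin]
  have hmem : Finset.image q univ ∈ (univ : Finset (Fin n)).powersetCard k :=
    Finset.mem_powersetCard.mpr ⟨Finset.subset_univ _, hcard⟩
  set S : {s : Finset (Fin n) // s ∈ (univ : Finset (Fin n)).powersetCard k} := ⟨_, hmem⟩
  have h1 : ∏ i, g (q i) = ∏ x ∈ Finset.image q univ, g x :=
    (Finset.prod_image (fun a _ b _ hab => hq hab)).symm
  have h2 : ∏ x ∈ Finset.image q univ, g x = ∏ i, g (enumOf S i) := by
    have h3 : ∏ x ∈ Finset.image (enumOf S) univ, g x = ∏ i, g (enumOf S i) :=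
      Finset.prod_image (fun a _ b _ hab => enumOf_injective S hab)
    rw [image_enumOf S] at h3
    simpa [S] using h3
  rw [h1, h2]
  refine Finset.prod_le_prod (fun i _ => hg0 _) (fun i _ => hga ?_)
  rw [Fin.le_def]
  exact strictMono_fin_le (enumOf_strictMono S) i

theorem eigDesc_antitone {n : ℕ} {A : Matrix (Fin n) (Fin n) ℂ} (hA : A.IsHermitian) :
    Antitone (eigDesc hA) := by
  intro i j hij
  exact Tuple.monotone_sort hA.eigenvalues (Fin.rev_le_rev.mpr hij)

theorem eigenvalues_eq_eigDesc {n : ℕ} {A : Matrix (Fin n) (Fin n) ℂ} (hA : A.IsHermitian)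
    (j : Fin n) :
    hA.eigenvalues j = eigDesc hA ((Tuple.sort hA.eigenvalues).symm j).rev := by
  unfold eigDesc
  rw [Fin.rev_rev, Equiv.apply_symm_apply]

theorem eigDesc_nonneg {n : ℕ} {A : Matrix (Fin n) (Fin n) ℂ} (hA : A.PosSemidef) (i : Fin n) :
    0 ≤ eigDesc hA.isHermitian i :=
  hA.eigenvalues_nonneg _

/-- Compression bound: for an isometry `W` (orthonormal columns), `det (Wᴴ M W)` is a
nonnegative real bounded by the product of the `k` largest eigenvalues of `M`. -/
theorem frame_det_le {n k : ℕ} (hk : k ≤ n) {M : Matrix (Fin n) (Fin n) ℂ} (hM : M.PosSemidef)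
    (W : Matrix (Fin n) (Fin k) ℂ) (hW : Wᴴ * W = 1) :
    ∃ r : ℝ, det (Wᴴ * M * W) = (r : ℂ) ∧ 0 ≤ r ∧
      r ≤ ∏ i : Fin k, eigDesc hM.isHermitian (Fin.castLE hk i) := by
  set f := hM.isHermitian.eigenvalues with hf
  set U := (Matrix.IsHermitian.eigenvectorUnitary hM.isHermitian : Matrix (Fin n) (Fin n) ℂ)
    with hU
  set V := (star U) * W with hV
  have hUU : star U * U = 1 := by
    exact Unitary.coe_star_mul_self (Matrix.IsHermitian.eigenvectorUnitary hM.isHermitian)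
  have hUU' : U * star U = 1 :=
    Matrix.mem_unitaryGroup_iff.mp (Matrix.IsHermitian.eigenvectorUnitary hM.isHermitian).2
  have hdiag : (Matrix.diagonal (RCLike.ofReal ∘ f) : Matrix (Fin n) (Fin n) ℂ)
      = Matrix.diagonal (fun i => (f i : ℂ)) := rfl
  have hWMW : Wᴴ * M * W = Vᴴ * Matrix.diagonal (fun i => (f i : ℂ)) * V := by
    conv_lhs => rw [hM.isHermitian.spectral_theorem]
    rw [hV, conjTranspose_mul, Matrix.star_eq_conjTranspose U, conjTranspose_conjTranspose,
      hdiag]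
    simp only [Matrix.mul_assoc, Unitary.conjStarAlgAut_apply, Matrix.star_eq_conjTranspose]
    rfl
  have hVV : Vᴴ * V = 1 := by
    rw [hV, conjTranspose_mul, Matrix.star_eq_conjTranspose U, conjTranspose_conjTranspose]
    calc Wᴴ * U * (Uᴴ * W) = Wᴴ * (U * Uᴴ * W) := by simp only [Matrix.mul_assoc]
    _ = 1 := by rw [← Matrix.star_eq_conjTranspose U, hUU', Matrix.one_mul, hW]
  have hsum1 : ∑ S ∈ ((univ : Finset (Fin n)).powersetCard k).attach,
      Complex.normSq (det (V.submatrix (enumOf S) id)) = 1 := by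
    have := det_conjTranspose_mul_self_expand V
    rw [hVV, Matrix.det_one] at this
    exact_mod_cast this.symm
  refine ⟨∑ S ∈ ((univ : Finset (Fin n)).powersetCard k).attach,
      (∏ i, f (enumOf S i)) * Complex.normSq (det (V.submatrix (enumOf S) id)), ?_, ?_, ?_⟩
  · rw [hWMW, det_conjTranspose_diag_mul]
  · refine Finset.sum_nonneg fun S _ => mul_nonneg (Finset.prod_nonneg fun i _ => ?_)
      (Complex.normSq_nonneg _)
    exact hM.eigenvalues_nonneg _
  · have step1 : ∑ S ∈ ((univ : Finset (Fin n)).powersetCard k).attach,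
        (∏ i, f (enumOf S i)) * Complex.normSq (det (V.submatrix (enumOf S) id))
        ≤ ∑ S ∈ ((univ : Finset (Fin n)).powersetCard k).attach,
          (∏ i : Fin k, eigDesc hM.isHermitian (Fin.castLE hk i)) *
            Complex.normSq (det (V.submatrix (enumOf S) id)) := by
      refine Finset.sum_le_sum fun S _ => mul_le_mul_of_nonneg_right ?_ (Complex.normSq_nonneg _)
      have hq : Function.Injective
          (fun i : Fin k => ((Tuple.sort f).symm (enumOf S i)).rev) := by
        intro a b hab
        exact enumOf_injective S ((Tuple.sort f).symm.injective (Fin.rev_injective hab))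
      have hrw : ∏ i, f (enumOf S i)
          = ∏ i, eigDesc hM.isHermitian ((Tuple.sort f).symm (enumOf S i)).rev := by
        refine Finset.prod_congr rfl fun i _ => ?_
        exact eigenvalues_eq_eigDesc hM.isHermitian (enumOf S i)
      rw [hrw]
      exact prod_comp_le hk _ (eigDesc_antitone hM.isHermitian) (eigDesc_nonneg hM) _ hq
    have step2 : ∑ S ∈ ((univ : Finset (Fin n)).powersetCard k).attach,
        (∏ i : Fin k, eigDesc hM.isHermitian (Fin.castLE hk i)) *
          Complex.normSq (det (V.submatrix (enumOf S) id))
        = ∏ i : Fin k, eigDesc hM.isHermitian (Fin.castLE hk i) := by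
      rw [← Finset.mul_sum, hsum1, mul_one]
    exact step1.trans (le_of_eq step2)

theorem psd_det {n : ℕ} {N : Matrix (Fin n) (Fin n) ℂ} (hN : N.PosSemidef) :
    ∃ s : ℝ, 0 ≤ s ∧ det N = (s : ℂ) := by
  refine ⟨∏ i, hN.isHermitian.eigenvalues i,
    Finset.prod_nonneg fun i _ => hN.eigenvalues_nonneg i, ?_⟩
  rw [hN.isHermitian.det_eq_prod_eigenvalues]
  push_cast
  rfl

/-- Generalized compression bound with an arbitrary (not necessarily isometric) `C`. -/
theorem compress_det_le {n k : ℕ} (hk : k ≤ n) {M : Matrix (Fin n) (Fin n) ℂ}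
    (hM : M.PosSemidef) (C : Matrix (Fin n) (Fin k) ℂ) :
    ∃ r s : ℝ, det (Cᴴ * M * C) = (r : ℂ) ∧ det (Cᴴ * C) = (s : ℂ) ∧ 0 ≤ r ∧ 0 ≤ s ∧
      r ≤ (∏ i : Fin k, eigDesc hM.isHermitian (Fin.castLE hk i)) * s := by
  obtain ⟨s, hs0, hsdet⟩ := psd_det (posSemidef_conjTranspose_mul_self C)
  by_cases hzero : det (Cᴴ * C) = 0
  · -- rank-deficient case
    obtain ⟨x, hx, hx0⟩ := (Matrix.exists_mulVec_eq_zero_iff).mpr hzero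
    have hCx : C *ᵥ x = 0 := by
      have h1 : star (C *ᵥ x) ⬝ᵥ (C *ᵥ x) = 0 := by
        rw [Matrix.star_mulVec, Matrix.dotProduct_mulVec, Matrix.vecMul_vecMul,
          ← Matrix.dotProduct_mulVec, hx0, dotProduct_zero]
      exact (dotProduct_star_self_eq_zero).mp h1
    have hdet0 : det (Cᴴ * M * C) = 0 := by
      refine (Matrix.exists_mulVec_eq_zero_iff).mp ⟨x, hx, ?_⟩
      rw [Matrix.mul_assoc, ← Matrix.mulVec_mulVec, ← Matrix.mulVec_mulVec, hCx,
        Matrix.mulVec_zero, Matrix.mulVec_zero]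
    refine ⟨0, 0, by rw [hdet0]; norm_num, by rw [hzero]; norm_num, le_refl 0, le_refl 0, by simp⟩
  · -- invertible Gram case
    open scoped MatrixOrder in
    set S := CFC.sqrt (Cᴴ * C) with hS
    open scoped MatrixOrder in
    have hSH : S.IsHermitian :=
      (Matrix.nonneg_iff_posSemidef.mp (CFC.sqrt_nonneg (Cᴴ * C))).isHermitian
    open scoped MatrixOrder in
    have hSS : S * S = Cᴴ * C := CFC.sqrt_mul_sqrt_self (Cᴴ * C)
      (Matrix.nonneg_iff_posSemidef.mpr (posSemidef_conjTranspose_mul_self C))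
    have hdetS : det S ≠ 0 := by
      intro h
      apply hzero
      rw [← hSS, Matrix.det_mul, h, zero_mul]
    have hinv : IsUnit S.det := isUnit_iff_ne_zero.mpr hdetS
    set W := C * S⁻¹ with hW
    have hC : C = W * S := by
      rw [hW, Matrix.mul_assoc, Matrix.nonsing_inv_mul S hinv, Matrix.mul_one]
    have hWH : Wᴴ = S⁻¹ * Cᴴ := by
      rw [hW, Matrix.conjTranspose_mul, Matrix.conjTranspose_nonsing_inv, hSH.eq]
    have hWW : Wᴴ * W = 1 := by
      rw [hWH, hW]
      calc S⁻¹ * Cᴴ * (C * S⁻¹) = S⁻¹ * (Cᴴ * C) * S⁻¹ := by simp only [Matrix.mul_assoc]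
        _ = S⁻¹ * (S * S) * S⁻¹ := by rw [hSS]
        _ = (S⁻¹ * S) * (S * S⁻¹) := by simp only [Matrix.mul_assoc]
        _ = 1 := by rw [Matrix.nonsing_inv_mul S hinv, Matrix.mul_nonsing_inv S hinv, one_mul]
    obtain ⟨r₀, hr₀det, hr₀0, hr₀le⟩ := frame_det_le hk hM W hWW
    have hdet : det (Cᴴ * M * C) = (r₀ : ℂ) * det (Cᴴ * C) := by
      conv_lhs => rw [hC]
      have hexp : (W * S)ᴴ * M * (W * S) = Sᴴ * (Wᴴ * M * W) * S := by
        simp only [Matrix.conjTranspose_mul, Matrix.mul_assoc]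
      rw [hexp, Matrix.det_mul, Matrix.det_mul, hr₀det, hSH.eq, ← hSS, Matrix.det_mul]
      ring
    refine ⟨r₀ * s, s, ?_, hsdet, mul_nonneg hr₀0 hs0, hs0,
      mul_le_mul_of_nonneg_right hr₀le hs0⟩
    rw [hdet, hsdet]
    push_cast
    ring

/-- A Hermitian matrix has an isometric `n × k` frame of eigenvectors for its `k`
largest eigenvalues. -/
theorem exists_eig_frame {n k : ℕ} (hk : k ≤ n) {M : Matrix (Fin n) (Fin n) ℂ}
    (hM : M.IsHermitian) :
    ∃ W : Matrix (Fin n) (Fin k) ℂ, Wᴴ * W = 1 ∧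
      M * W = W * Matrix.diagonal (fun i => (eigDesc hM (Fin.castLE hk i) : ℂ)) := by
  set σ : Fin k → Fin n := fun i => Tuple.sort hM.eigenvalues (Fin.castLE hk i).rev with hσ
  have hσinj : Function.Injective σ := by
    intro a b hab
    have h1 := (Tuple.sort hM.eigenvalues).injective hab
    exact Fin.castLE_injective hk (Fin.rev_injective h1)
  set U := (Matrix.IsHermitian.eigenvectorUnitary hM : Matrix (Fin n) (Fin n) ℂ) with hU
  refine ⟨U.submatrix id σ, ?_, ?_⟩
  · ext a b
    have hUU : star U * U = 1 :=
      Unitary.coe_star_mul_self (Matrix.IsHermitian.eigenvectorUnitary hM)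
    have h1 : (star U * U) (σ a) (σ b) = (1 : Matrix (Fin n) (Fin n) ℂ) (σ a) (σ b) := by
      rw [hUU]
    rw [Matrix.mul_apply] at h1
    calc ((U.submatrix id σ)ᴴ * U.submatrix id σ) a b
        = ∑ l, (star U) (σ a) l * U l (σ b) := by
          simp [Matrix.mul_apply, Matrix.conjTranspose_apply, Matrix.star_apply]
      _ = (1 : Matrix (Fin n) (Fin n) ℂ) (σ a) (σ b) := h1
      _ = (1 : Matrix (Fin k) (Fin k) ℂ) a b := by
          rw [Matrix.one_apply, Matrix.one_apply]
          simp [hσinj.eq_iff]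
  · ext i a
    have hcol : (fun j => U j (σ a)) = ⇑(hM.eigenvectorBasis (σ a)) := by
      funext j
      exact Matrix.IsHermitian.eigenvectorUnitary_apply hM j (σ a)
    have hmv := hM.mulVec_eigenvectorBasis (σ a)
    have h1 : (M * U.submatrix id σ) i a = (M *ᵥ ⇑(hM.eigenvectorBasis (σ a))) i := by
      rw [← hcol]
      simp [Matrix.mul_apply, Matrix.mulVec, dotProduct]
    rw [h1, hmv]
    have h2 : (U.submatrix id σ * Matrix.diagonal
        (fun i => (eigDesc hM (Fin.castLE hk i) : ℂ))) i a
        = U i (σ a) * (eigDesc hM (Fin.castLE hk a) : ℂ) := by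
      rw [Matrix.mul_diagonal]
      rfl
    rw [h2]
    have h3 : eigDesc hM (Fin.castLE hk a) = hM.eigenvalues (σ a) := rfl
    rw [h3]
    have h4 : U i (σ a) = hM.eigenvectorBasis (σ a) i :=
      Matrix.IsHermitian.eigenvectorUnitary_apply hM i (σ a)
    simp [Pi.smul_apply, Complex.real_smul, h4]
    ring

/-- Top-`k` eigenvalue products: `∏ λᵢ(A Aᴴ) ≤ ∏ λᵢ(Aᴴ A)` (they are in fact equal). -/
theorem prod_eigDesc_swap_le {m n k : ℕ} (hkm : k ≤ m) (hkn : k ≤ n)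
    (A : Matrix (Fin m) (Fin n) ℂ) :
    ∏ i : Fin k, eigDesc (posSemidef_self_mul_conjTranspose A).isHermitian (Fin.castLE hkm i)
      ≤ ∏ i : Fin k, eigDesc (posSemidef_conjTranspose_mul_self A).isHermitian
          (Fin.castLE hkn i) := by
  set d : Fin k → ℝ := fun i =>
    eigDesc (posSemidef_self_mul_conjTranspose A).isHermitian (Fin.castLE hkm i) with hd
  by_cases hz : ∃ i, d i = 0
  · obtain ⟨i, hi⟩ := hz
    rw [Finset.prod_eq_zero (Finset.mem_univ i) hi]
    exact Finset.prod_nonneg fun j _ => eigDesc_nonneg (posSemidef_conjTranspose_mul_self A) _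
  · push_neg at hz
    have hdpos : ∀ i, 0 < d i := fun i =>
      lt_of_le_of_ne (eigDesc_nonneg (posSemidef_self_mul_conjTranspose A) _) (Ne.symm (hz i))
    obtain ⟨W, hWW, hAAW⟩ :=
      exists_eig_frame hkm (posSemidef_self_mul_conjTranspose A).isHermitian
    set Dc : Matrix (Fin k) (Fin k) ℂ := Matrix.diagonal (fun i => (d i : ℂ)) with hDc
    set E : Matrix (Fin k) (Fin k) ℂ :=
      Matrix.diagonal (fun i => ((Real.sqrt (d i))⁻¹ : ℂ)) with hE
    set B := Aᴴ * W with hB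
    have hBB : Bᴴ * B = Dc := by
      have h1 : Bᴴ * B = Wᴴ * (A * Aᴴ * W) := by
        rw [hB, Matrix.conjTranspose_mul, Matrix.conjTranspose_conjTranspose]
        simp only [Matrix.mul_assoc]
      rw [h1, hAAW, ← Matrix.mul_assoc, hWW, one_mul]
    have hB2 : Bᴴ * (Aᴴ * A) * B = Dc * Dc := by
      have h1 : Bᴴ * (Aᴴ * A) * B = Wᴴ * (A * Aᴴ * (A * Aᴴ * W)) := by
        rw [hB, Matrix.conjTranspose_mul, Matrix.conjTranspose_conjTranspose]
        simp only [Matrix.mul_assoc]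
      rw [h1, hAAW, ← Matrix.mul_assoc (A * Aᴴ) W Dc, hAAW]
      calc Wᴴ * (W * Dc * Dc) = (Wᴴ * W) * (Dc * Dc) := by simp only [Matrix.mul_assoc]
        _ = Dc * Dc := by rw [hWW, one_mul]
    have hEstar : Eᴴ = E := by
      ext i j
      rcases eq_or_ne i j with rfl | hij
      · simp [hE, Matrix.conjTranspose_apply, Complex.conj_ofReal]
      · simp [hE, Matrix.conjTranspose_apply, Matrix.diagonal_apply_ne, hij, Ne.symm hij]
    set V := B * E with hV
    have hVform : ∀ N : Matrix (Fin n) (Fin n) ℂ, Vᴴ * N * V = Eᴴ * (Bᴴ * N * B) * E := by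
      intro N
      rw [hV, Matrix.conjTranspose_mul]
      simp only [Matrix.mul_assoc]
    have hVV : Vᴴ * V = 1 := by
      have h1 : Vᴴ * V = Eᴴ * (Bᴴ * B) * E := by
        rw [hV, Matrix.conjTranspose_mul]
        simp only [Matrix.mul_assoc]
      rw [h1, hBB, hEstar, hE, hDc, Matrix.diagonal_mul_diagonal, Matrix.diagonal_mul_diagonal]
      ext i j
      rcases eq_or_ne i j with rfl | hij
      · rw [Matrix.diagonal_apply_eq, Matrix.one_apply_eq]
        have h2 : Real.sqrt (d i) ≠ 0 := by
          rw [Real.sqrt_ne_zero']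
          exact hdpos i
        norm_cast
        field_simp
        rw [Real.sq_sqrt (hdpos i).le]
      · rw [Matrix.diagonal_apply_ne _ hij, Matrix.one_apply_ne hij]
    have hVAAV : Vᴴ * (Aᴴ * A) * V = Dc := by
      rw [hVform, hB2, hEstar, hE, hDc, Matrix.diagonal_mul_diagonal, Matrix.diagonal_mul_diagonal,
        Matrix.diagonal_mul_diagonal]
      ext i j
      rcases eq_or_ne i j with rfl | hij
      · rw [Matrix.diagonal_apply_eq, Matrix.diagonal_apply_eq]
        have h2 : Real.sqrt (d i) ≠ 0 := by
          rw [Real.sqrt_ne_zero']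
          exact hdpos i
        norm_cast
        field_simp
        rw [Real.sq_sqrt (hdpos i).le]
        ring
      · rw [Matrix.diagonal_apply_ne _ hij, Matrix.diagonal_apply_ne _ hij]
    obtain ⟨r, hrdet, hr0, hrle⟩ :=
      frame_det_le hkn (posSemidef_conjTranspose_mul_self A) V hVV
    have hdetD : det (Vᴴ * (Aᴴ * A) * V) = ((∏ i, d i : ℝ) : ℂ) := by
      rw [hVAAV, hDc, Matrix.det_diagonal]
      push_cast
      rfl
    have hr : r = ∏ i, d i := by
      have := hrdet.symm.trans hdetD
      exact_mod_cast this
    rw [← hr]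
    exact hrle

end Auxiliary

/-- **Log-majorization eigenvalue chain of Theorem 1 of the paper (Appendix A).**
With `H = A_u T X G A_bᴴ`, `T = diag t`, `G = diag g` and `Q ⪰ 0`, for every
`1 ≤ k ≤ min(N_u, L, P)`,
`∏_{i=1}^k λᵢ(H Q Hᴴ) ≤ ∏_{i=1}^k λᵢ(A_uᴴA_u) λᵢ(A_bᴴQA_b) λᵢ(XᴴX) λᵢ(GᴴG) λᵢ(TᴴT)`. -/
theorem prod_eigenvalues_channel_le (Nu Nb L P : ℕ)
    (hNu : 0 < Nu) (hNb : 0 < Nb) (hL : 0 < L) (hP : 0 < P)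
    (Au : Matrix (Fin Nu) (Fin L) ℂ) (X : Matrix (Fin L) (Fin P) ℂ)
    (Ab : Matrix (Fin Nb) (Fin P) ℂ) (t : Fin L → ℂ) (g : Fin P → ℂ)
    (Q : Matrix (Fin Nb) (Fin Nb) ℂ) (hQ : Q.PosSemidef)
    (k : ℕ) (hk1 : 1 ≤ k) (hk : k ≤ min Nu (min L P)) :
    ∏ i : Fin k,
        eigDesc (hQ.mul_mul_conjTranspose_same
            (Au * Matrix.diagonal t * X * Matrix.diagonal g * Abᴴ)).isHermitian
          (Fin.castLE (hk.trans (min_le_left _ _)) i)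
      ≤ ∏ i : Fin k,
          eigDesc (Matrix.posSemidef_conjTranspose_mul_self Au).isHermitian
              (Fin.castLE (hk.trans ((min_le_right _ _).trans (min_le_left _ _))) i) *
          eigDesc (hQ.conjTranspose_mul_mul_same Ab).isHermitian
              (Fin.castLE (hk.trans ((min_le_right _ _).trans (min_le_right _ _))) i) *
          eigDesc (Matrix.posSemidef_conjTranspose_mul_self X).isHermitian
              (Fin.castLE (hk.trans ((min_le_right _ _).trans (min_le_right _ _))) i) *
          eigDesc (Matrix.posSemidef_conjTranspose_mul_self (Matrix.diagonal g)).isHermitian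
              (Fin.castLE (hk.trans ((min_le_right _ _).trans (min_le_right _ _))) i) *
          eigDesc (Matrix.posSemidef_conjTranspose_mul_self (Matrix.diagonal t)).isHermitian
              (Fin.castLE (hk.trans ((min_le_right _ _).trans (min_le_left _ _))) i) := by
  -- dimension bounds
  have hkNu : k ≤ Nu := hk.trans (min_le_left _ _)
  have hkL : k ≤ L := hk.trans ((min_le_right _ _).trans (min_le_left _ _))
  have hkP : k ≤ P := hk.trans ((min_le_right _ _).trans (min_le_right _ _))
  set H : Matrix (Fin Nu) (Fin Nb) ℂ := Au * Matrix.diagonal t * X * Matrix.diagonal g * Abᴴ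
    with hH
  have hM0 : (H * Q * Hᴴ).PosSemidef := hQ.mul_mul_conjTranspose_same H
  set M1 : Matrix (Fin L) (Fin L) ℂ :=
    X * (Matrix.diagonal g * (Abᴴ * Q * Ab) * (Matrix.diagonal g)ᴴ) * Xᴴ with hM1def
  have hM1 : M1.PosSemidef :=
    ((hQ.conjTranspose_mul_mul_same Ab).mul_mul_conjTranspose_same
      (Matrix.diagonal g)).mul_mul_conjTranspose_same X
  -- shorthand for the five products of descending eigenvalues
  set PAu : ℝ := ∏ i : Fin k,
    eigDesc (Matrix.posSemidef_conjTranspose_mul_self Au).isHermitian (Fin.castLE hkL i) with hPAu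
  set PQb : ℝ := ∏ i : Fin k,
    eigDesc (hQ.conjTranspose_mul_mul_same Ab).isHermitian (Fin.castLE hkP i) with hPQb
  set PX : ℝ := ∏ i : Fin k,
    eigDesc (Matrix.posSemidef_conjTranspose_mul_self X).isHermitian (Fin.castLE hkP i) with hPX
  set PG : ℝ := ∏ i : Fin k,
    eigDesc (Matrix.posSemidef_conjTranspose_mul_self (Matrix.diagonal g)).isHermitian
      (Fin.castLE hkP i) with hPG
  set PT : ℝ := ∏ i : Fin k,
    eigDesc (Matrix.posSemidef_conjTranspose_mul_self (Matrix.diagonal t)).isHermitian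
      (Fin.castLE hkL i) with hPT
  set P0 : ℝ := ∏ i : Fin k, eigDesc hM0.isHermitian (Fin.castLE hkNu i) with hP0
  set PM1 : ℝ := ∏ i : Fin k, eigDesc hM1.isHermitian (Fin.castLE hkL i) with hPM1
  have hPAu0 : 0 ≤ PAu :=
    Finset.prod_nonneg fun i _ => eigDesc_nonneg (Matrix.posSemidef_conjTranspose_mul_self Au) _
  have hPQb0 : 0 ≤ PQb :=
    Finset.prod_nonneg fun i _ => eigDesc_nonneg (hQ.conjTranspose_mul_mul_same Ab) _
  have hPX0 : 0 ≤ PX :=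
    Finset.prod_nonneg fun i _ => eigDesc_nonneg (Matrix.posSemidef_conjTranspose_mul_self X) _
  have hPG0 : 0 ≤ PG :=
    Finset.prod_nonneg fun i _ =>
      eigDesc_nonneg (Matrix.posSemidef_conjTranspose_mul_self (Matrix.diagonal g)) _
  have hPT0 : 0 ≤ PT :=
    Finset.prod_nonneg fun i _ =>
      eigDesc_nonneg (Matrix.posSemidef_conjTranspose_mul_self (Matrix.diagonal t)) _
  have hPM10 : 0 ≤ PM1 := Finset.prod_nonneg fun i _ => eigDesc_nonneg hM1 _
  -- commutation of diagonal matrices with their adjoints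
  have hTcomm : Matrix.diagonal t * (Matrix.diagonal t)ᴴ
      = (Matrix.diagonal t)ᴴ * Matrix.diagonal t := by
    rw [Matrix.diagonal_conjTranspose, Matrix.diagonal_mul_diagonal, Matrix.diagonal_mul_diagonal]
    exact congrArg Matrix.diagonal (funext fun i => mul_comm _ _)
  have hGcomm : Matrix.diagonal g * (Matrix.diagonal g)ᴴ
      = (Matrix.diagonal g)ᴴ * Matrix.diagonal g := by
    rw [Matrix.diagonal_conjTranspose, Matrix.diagonal_mul_diagonal, Matrix.diagonal_mul_diagonal]
    exact congrArg Matrix.diagonal (funext fun i => mul_comm _ _)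
  -- ### step 1 : the frame attaining the top-k eigenvalues of H Q Hᴴ
  obtain ⟨W, hWW, hMW⟩ := exists_eig_frame hkNu hM0.isHermitian
  have hdet0 : det (Wᴴ * (H * Q * Hᴴ) * W) = (P0 : ℂ) := by
    rw [Matrix.mul_assoc, hMW, ← Matrix.mul_assoc, hWW, one_mul, Matrix.det_diagonal, hP0]
    norm_cast
  set C1 : Matrix (Fin L) (Fin k) ℂ := (Matrix.diagonal t)ᴴ * (Auᴴ * W) with hC1
  have hEq1 : Wᴴ * (H * Q * Hᴴ) * W = C1ᴴ * M1 * C1 := by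
    rw [hH, hC1, hM1def]
    simp only [Matrix.conjTranspose_mul, Matrix.conjTranspose_conjTranspose, Matrix.mul_assoc]
  obtain ⟨r1, s1, hr1, hs1, hr10, hs10, hb1⟩ := compress_det_le hkL hM1 C1
  have hP0r1 : P0 = r1 := by
    have h := hdet0
    rw [hEq1, hr1] at h
    exact_mod_cast h.symm
  -- ### step 2 : peel off Tᴴ T
  set C2 : Matrix (Fin L) (Fin k) ℂ := Auᴴ * W with hC2
  have hEq2 : C1ᴴ * C1 = C2ᴴ * ((Matrix.diagonal t)ᴴ * Matrix.diagonal t) * C2 := by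
    rw [hC1, hC2]
    simp only [Matrix.conjTranspose_mul, Matrix.conjTranspose_conjTranspose, Matrix.mul_assoc]
    rw [← Matrix.mul_assoc (Matrix.diagonal t) ((Matrix.diagonal t)ᴴ) (Auᴴ * W), hTcomm,
      Matrix.mul_assoc]
  obtain ⟨r2, s2, hr2, hs2, hr20, hs20, hb2⟩ :=
    compress_det_le hkL (Matrix.posSemidef_conjTranspose_mul_self (Matrix.diagonal t)) C2
  have hs1r2 : s1 = r2 := by
    have h := hs1
    rw [hEq2, hr2] at h
    exact_mod_cast h.symm
  -- ### step 3 : the Gram determinant of C2 is controlled by λ(Au Auᴴ), then swapped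
  have hEq3 : C2ᴴ * C2 = Wᴴ * (Au * Auᴴ) * W := by
    rw [hC2]
    simp only [Matrix.conjTranspose_mul, Matrix.conjTranspose_conjTranspose, Matrix.mul_assoc]
  obtain ⟨r3, hr3, hr30, hb3⟩ :=
    frame_det_le hkNu (Matrix.posSemidef_self_mul_conjTranspose Au) W hWW
  have hs2r3 : s2 = r3 := by
    have h := hs2
    rw [hEq3, hr3] at h
    exact_mod_cast h.symm
  have hAuswap := prod_eigDesc_swap_le hkNu hkL Au
  have hr3Au : r3 ≤ PAu := hb3.trans hAuswap
  -- ### step 4 : bound PM1 the same way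
  obtain ⟨V, hVV, hM1V⟩ := exists_eig_frame hkL hM1.isHermitian
  have hdetM1 : det (Vᴴ * M1 * V) = (PM1 : ℂ) := by
    rw [Matrix.mul_assoc, hM1V, ← Matrix.mul_assoc, hVV, one_mul, Matrix.det_diagonal, hPM1]
    norm_cast
  set C3 : Matrix (Fin P) (Fin k) ℂ := (Matrix.diagonal g)ᴴ * (Xᴴ * V) with hC3
  have hEq4 : Vᴴ * M1 * V = C3ᴴ * (Abᴴ * Q * Ab) * C3 := by
    rw [hM1def, hC3]
    simp only [Matrix.conjTranspose_mul, Matrix.conjTranspose_conjTranspose, Matrix.mul_assoc]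
  obtain ⟨r4, s4, hr4, hs4, hr40, hs40, hb4⟩ :=
    compress_det_le hkP (hQ.conjTranspose_mul_mul_same Ab) C3
  have hPM1r4 : PM1 = r4 := by
    have h := hdetM1
    rw [hEq4, hr4] at h
    exact_mod_cast h.symm
  -- ### step 5 : peel off Gᴴ G
  set C4 : Matrix (Fin P) (Fin k) ℂ := Xᴴ * V with hC4
  have hEq5 : C3ᴴ * C3 = C4ᴴ * ((Matrix.diagonal g)ᴴ * Matrix.diagonal g) * C4 := by
    rw [hC3, hC4]
    simp only [Matrix.conjTranspose_mul, Matrix.conjTranspose_conjTranspose, Matrix.mul_assoc]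
    rw [← Matrix.mul_assoc (Matrix.diagonal g) ((Matrix.diagonal g)ᴴ) (Xᴴ * V), hGcomm,
      Matrix.mul_assoc]
  obtain ⟨r5, s5, hr5, hs5, hr50, hs50, hb5⟩ :=
    compress_det_le hkP (Matrix.posSemidef_conjTranspose_mul_self (Matrix.diagonal g)) C4
  have hs4r5 : s4 = r5 := by
    have h := hs4
    rw [hEq5, hr5] at h
    exact_mod_cast h.symm
  -- ### step 6 : the Gram determinant of C4 is controlled by λ(X Xᴴ), then swapped
  have hEq6 : C4ᴴ * C4 = Vᴴ * (X * Xᴴ) * V := by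
    rw [hC4]
    simp only [Matrix.conjTranspose_mul, Matrix.conjTranspose_conjTranspose, Matrix.mul_assoc]
  obtain ⟨r6, hr6, hr60, hb6⟩ :=
    frame_det_le hkL (Matrix.posSemidef_self_mul_conjTranspose X) V hVV
  have hs5r6 : s5 = r6 := by
    have h := hs5
    rw [hEq6, hr6] at h
    exact_mod_cast h.symm
  have hXswap := prod_eigDesc_swap_le hkL hkP X
  have hr6X : r6 ≤ PX := hb6.trans hXswap
  -- ### combine everything
  have hPM1le : PM1 ≤ PQb * (PG * PX) := by
    calc PM1 = r4 := hPM1r4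
      _ ≤ PQb * s4 := hb4
      _ = PQb * r5 := by rw [hs4r5]
      _ ≤ PQb * (PG * s5) := mul_le_mul_of_nonneg_left hb5 hPQb0
      _ = PQb * (PG * r6) := by rw [hs5r6]
      _ ≤ PQb * (PG * PX) := by
          refine mul_le_mul_of_nonneg_left (mul_le_mul_of_nonneg_left ?_ hPG0) hPQb0
          exact hr6X
  have hP0le : P0 ≤ PM1 * (PT * PAu) := by
    calc P0 = r1 := hP0r1
      _ ≤ PM1 * s1 := hb1
      _ = PM1 * r2 := by rw [hs1r2]
      _ ≤ PM1 * (PT * s2) := mul_le_mul_of_nonneg_left hb2 hPM10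
      _ = PM1 * (PT * r3) := by rw [hs2r3]
      _ ≤ PM1 * (PT * PAu) := by
          refine mul_le_mul_of_nonneg_left (mul_le_mul_of_nonneg_left ?_ hPT0) hPM10
          exact hr3Au
  have hfinal : P0 ≤ PAu * PQb * PX * PG * PT := by
    calc P0 ≤ PM1 * (PT * PAu) := hP0le
      _ ≤ (PQb * (PG * PX)) * (PT * PAu) :=
          mul_le_mul_of_nonneg_right hPM1le (mul_nonneg hPT0 hPAu0)
      _ = PAu * PQb * PX * PG * PT := by ring
  calc ∏ i : Fin k, eigDesc hM0.isHermitian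
        (Fin.castLE (hk.trans (min_le_left _ _)) i) = P0 := rfl
    _ ≤ PAu * PQb * PX * PG * PT := hfinal
    _ = _ := by
        rw [hPAu, hPQb, hPX, hPG, hPT]
        rw [← Finset.prod_mul_distrib, ← Finset.prod_mul_distrib, ← Finset.prod_mul_distrib,
          ← Finset.prod_mul_distrib]
end
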